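/- arXiv:1801.01014 — 5 statements merged into one kernel-verified Lean document; each statement's English description precedes it below -/
import Mathlib

section
/- Let (X,d) be an unbounded metric space and let n≥2 be an integer. Then the inequality |V(G_{X,r̃})| ≤ n holds for every scaling sequence r̃ if and only if, for every scaling sequence r̃, both of the following are valid: (1) |C| ≤ n holds for every clique C ⊆ V(G_{X,r̃}); (2) the labeling ρ⁰ : V(G_{X,r̃}) → ℝ⁺ is injective. -/
open Filter Topology
open scoped Classical

/-- An unbounded metric space. -/
def UnboundedSpace (X : Type*) [MetricSpace X] : Prop :=
  ¬ Bornology.IsBounded (Set.univ : Set X)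

/-- A scaling sequence: positive reals tending to infinity. -/
def ScalingSeq (r : ℕ → ℝ) : Prop :=
  (∀ n, 0 < r n) ∧ Filter.Tendsto r Filter.atTop Filter.atTop

/-- Two sequences are mutually stable w.r.t. `r` if `d(x_n, y_n)/r_n` has a finite limit. -/
def MutuallyStable {X : Type*} [MetricSpace X] (r : ℕ → ℝ) (x y : ℕ → X) : Prop :=
  ∃ L : ℝ, Filter.Tendsto (fun n => dist (x n) (y n) / r n) Filter.atTop (nhds L)

/-- `Seq(X, r̃)`: sequences going to infinity such that `d(x_n, p)/r_n` has a finite limit. -/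
def SeqInf {X : Type*} [MetricSpace X] (r : ℕ → ℝ) (p : X) : Set (ℕ → X) :=
  {x | Filter.Tendsto (fun n => dist (x n) p) Filter.atTop Filter.atTop ∧
    ∃ L : ℝ, Filter.Tendsto (fun n => dist (x n) p / r n) Filter.atTop (nhds L)}

/-- The relation `x̃ ≡ ỹ`, i.e. `d(x_n, y_n)/r_n → 0`. -/
def EquivSeq {X : Type*} [MetricSpace X] (r : ℕ → ℝ) (x y : ℕ → X) : Prop :=
  Filter.Tendsto (fun n => dist (x n) (y n) / r n) Filter.atTop (nhds 0)

/-- The `≡`-equivalence class of `x` inside `Seq(X, r̃)`. -/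
def classOf {X : Type*} [MetricSpace X] (r : ℕ → ℝ) (p : X) (x : ℕ → X) : Set (ℕ → X) :=
  {y | y ∈ SeqInf r p ∧ EquivSeq r x y}

/-- The vertex set of the cluster graph `G_{X, r̃}`: all `≡`-classes of `Seq(X, r̃)`. -/
def VertexSet {X : Type*} [MetricSpace X] (r : ℕ → ℝ) (p : X) : Set (Set (ℕ → X)) :=
  {v | ∃ x ∈ SeqInf r p, v = classOf r p x}

/-- Adjacency in the cluster graph `G_{X, r̃}`: distinct classes whose representatives
are mutually stable. -/
def AdjacentCl {X : Type*} [MetricSpace X] (r : ℕ → ℝ) (p : X) (u v : Set (ℕ → X)) : Prop :=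
  u ∈ VertexSet r p ∧ v ∈ VertexSet r p ∧ u ≠ v ∧
    ∀ x ∈ u, ∀ y ∈ v, MutuallyStable r x y

/-- The weight `ρ_X` on the cluster graph: for an edge `{u,v}` it is the (unique) limit
`lim d(x_n, y_n)/r_n` for representatives. -/
noncomputable def rhoX {X : Type*} [MetricSpace X] (r : ℕ → ℝ) (u v : Set (ℕ → X)) : ℝ :=
  sSup {L : ℝ | ∃ x ∈ u, ∃ y ∈ v,
    Filter.Tendsto (fun n => dist (x n) (y n) / r n) Filter.atTop (nhds L)}

/-- The root `ν₀ = X̃⁰_{∞,r̃}`: sequences with `d(z_n,p) → ∞` and `d(z_n,p)/r_n → 0`. -/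
def rootClass {X : Type*} [MetricSpace X] (r : ℕ → ℝ) (p : X) : Set (ℕ → X) :=
  {z | Filter.Tendsto (fun n => dist (z n) p) Filter.atTop Filter.atTop ∧
    Filter.Tendsto (fun n => dist (z n) p / r n) Filter.atTop (nhds 0)}

/-- The labeling `ρ⁰` of vertices: `ρ⁰(v) = lim d(x_n,p)/r_n` for `x̃ ∈ v`. -/
noncomputable def rho0 {X : Type*} [MetricSpace X] (r : ℕ → ℝ) (p : X)
    (v : Set (ℕ → X)) : ℝ :=
  sSup {L : ℝ | ∃ x ∈ v, Filter.Tendsto (fun n => dist (x n) p / r n) Filter.atTop (nhds L)}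

/-- A self-stable family: a subset of `Seq(X, r̃)` any two of whose members are
mutually stable. -/
def SelfStable {X : Type*} [MetricSpace X] (r : ℕ → ℝ) (p : X) (F : Set (ℕ → X)) : Prop :=
  F ⊆ SeqInf r p ∧ ∀ x ∈ F, ∀ y ∈ F, MutuallyStable r x y

/-- A maximal self-stable set `X̃_{∞, r̃}`. -/
def MaxSelfStable {X : Type*} [MetricSpace X] (r : ℕ → ℝ) (p : X) (F : Set (ℕ → X)) : Prop :=
  SelfStable r p F ∧ ∀ F', SelfStable r p F' → F ⊆ F' → F = F'

/-- The pretangent space `Ω^X_{∞,r̃}` attached to a maximal self-stable set `F`: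
the set of `≡`-classes of members of `F`. -/
def PretangentCl {X : Type*} [MetricSpace X] (r : ℕ → ℝ) (F : Set (ℕ → X)) :
    Set (Set (ℕ → X)) :=
  {v | ∃ x ∈ F, v = {y | y ∈ F ∧ EquivSeq r x y}}

/-- A clique in the cluster graph `G_{X, r̃}`. -/
def IsCliqueCl {X : Type*} [MetricSpace X] (r : ℕ → ℝ) (p : X)
    (C : Set (Set (ℕ → X))) : Prop :=
  C ⊆ VertexSet r p ∧ ∀ u ∈ C, ∀ v ∈ C, u ≠ v → AdjacentCl r p u v


-- transfer lemma
lemma aux_div_congr {f g r : ℕ → ℝ} (hr : ∀ n, 0 < r n) {b : ℕ → ℝ}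
    (hfg : ∀ n, |f n - g n| ≤ b n)
    (hb : Tendsto (fun n => b n / r n) atTop (nhds 0)) {L : ℝ}
    (hf : Tendsto (fun n => f n / r n) atTop (nhds L)) :
    Tendsto (fun n => g n / r n) atTop (nhds L) := by
  have h0 : Tendsto (fun n => (g n - f n) / r n) atTop (nhds 0) := by
    apply squeeze_zero_norm (fun n => ?_) hb
    rw [Real.norm_eq_abs, abs_div, abs_of_pos (hr n), abs_sub_comm]
    exact div_le_div_of_nonneg_right (hfg n) (hr n).le
  have h2 := hf.add h0
  simp only [add_zero] at h2
  have he : (fun n => g n / r n) = fun n => f n / r n + (g n - f n) / r n := by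
    funext n; rw [← add_div]; ring_nf
  rw [he]; exact h2

lemma aux_ite_tendsto {P : ℕ → Prop} [DecidablePred P] {A B : ℕ → ℝ} {L : ℝ}
    (hA : Tendsto A atTop (nhds L)) (hB : Tendsto B atTop (nhds L)) :
    Tendsto (fun m => if P m then A m else B m) atTop (nhds L) := by
  rw [tendsto_iff_dist_tendsto_zero] at hA hB ⊢
  apply squeeze_zero (fun n => dist_nonneg) (fun n => ?_) (by simpa using hA.add hB)
  by_cases h : P n
  · simp [h]
  · simp [h]

lemma aux_ite_tendsto_atTop {P : ℕ → Prop} [DecidablePred P] {A B : ℕ → ℝ}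
    (hA : Tendsto A atTop atTop) (hB : Tendsto B atTop atTop) :
    Tendsto (fun m => if P m then A m else B m) atTop atTop := by
  rw [tendsto_atTop] at hA hB ⊢
  intro b
  filter_upwards [hA b, hB b] with n h1 h2
  by_cases h : P n <;> simp [h, h1, h2]

lemma equivSeq_refl {X : Type*} [MetricSpace X] {r : ℕ → ℝ} (x : ℕ → X) :
    EquivSeq r x x := by
  simp only [EquivSeq, dist_self, zero_div]
  exact tendsto_const_nhds

lemma equivSeq_symm {X : Type*} [MetricSpace X] {r : ℕ → ℝ} {x y : ℕ → X}
    (h : EquivSeq r x y) : EquivSeq r y x := by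
  unfold EquivSeq at h ⊢
  simpa only [dist_comm] using h

/-- transfer a dist-to-`z` limit along an equivalence -/
lemma aux_transfer {X : Type*} [MetricSpace X] {r : ℕ → ℝ} (hr : ∀ n, 0 < r n)
    {x y z : ℕ → X} (hxy : EquivSeq r x y) {L : ℝ}
    (h : Tendsto (fun n => dist (x n) (z n) / r n) atTop (nhds L)) :
    Tendsto (fun n => dist (y n) (z n) / r n) atTop (nhds L) :=
  aux_div_congr hr (fun n => abs_dist_sub_le (x n) (y n) (z n)) hxy h

lemma aux_transfer_pt {X : Type*} [MetricSpace X] {r : ℕ → ℝ} (hr : ∀ n, 0 < r n)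
    {x y : ℕ → X} {p : X} (hxy : EquivSeq r x y) {L : ℝ}
    (h : Tendsto (fun n => dist (x n) p / r n) atTop (nhds L)) :
    Tendsto (fun n => dist (y n) p / r n) atTop (nhds L) :=
  aux_div_congr hr (fun n => abs_dist_sub_le (x n) (y n) p) hxy h

lemma mem_classOf_self {X : Type*} [MetricSpace X] {r : ℕ → ℝ} {p : X} {x : ℕ → X}
    (hx : x ∈ SeqInf r p) : x ∈ classOf r p x :=
  ⟨hx, equivSeq_refl x⟩

lemma classOf_eq_iff {X : Type*} [MetricSpace X] {r : ℕ → ℝ} (hr : ∀ n, 0 < r n)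
    {p : X} {x y : ℕ → X} (hx : x ∈ SeqInf r p) (hy : y ∈ SeqInf r p) :
    classOf r p x = classOf r p y ↔ EquivSeq r x y := by
  constructor
  · intro h
    have : x ∈ classOf r p y := h ▸ mem_classOf_self hx
    exact equivSeq_symm this.2
  · intro h
    ext z
    simp only [classOf, Set.mem_setOf_eq]
    constructor
    · rintro ⟨hz, he⟩
      exact ⟨hz, aux_transfer hr h he⟩
    · rintro ⟨hz, he⟩
      exact ⟨hz, aux_transfer hr (equivSeq_symm h) he⟩

lemma rho0_classOf {X : Type*} [MetricSpace X] {r : ℕ → ℝ} (hr : ∀ n, 0 < r n)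
    {p : X} {x : ℕ → X} (hx : x ∈ SeqInf r p) {L : ℝ}
    (hL : Tendsto (fun n => dist (x n) p / r n) atTop (nhds L)) :
    rho0 r p (classOf r p x) = L := by
  have hset : {L' : ℝ | ∃ y ∈ classOf r p x,
      Tendsto (fun n => dist (y n) p / r n) atTop (nhds L')} = {L} := by
    ext L'
    simp only [Set.mem_setOf_eq, Set.mem_singleton_iff]
    constructor
    · rintro ⟨y, ⟨hy, he⟩, hLy⟩
      exact tendsto_nhds_unique hLy (aux_transfer_pt hr he hL)
    · rintro rfl
      exact ⟨x, mem_classOf_self hx, hL⟩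
  rw [rho0, hset, csSup_singleton]



lemma aux_bdd_of_tendsto {f : ℕ → ℝ} {L : ℝ} (h : Tendsto f atTop (nhds L)) :
    ∃ C : ℝ, ∀ n, |f n| ≤ C := by
  obtain ⟨C, hC⟩ := h.abs.bddAbove_range
  exact ⟨C, fun n => hC ⟨n, rfl⟩⟩

lemma aux_subseq_list : ∀ (l : List (ℕ → ℝ)), (∀ f ∈ l, ∃ C, ∀ n, |f n| ≤ C) →
    ∃ φ : ℕ → ℕ, StrictMono φ ∧ ∀ f ∈ l, ∃ L, Tendsto (f ∘ φ) atTop (nhds L) := by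
  intro l
  induction l with
  | nil => exact fun _ => ⟨id, strictMono_id, by simp⟩
  | cons f l ih =>
    intro h
    obtain ⟨φ, hφ, hconv⟩ := ih (fun g hg => h g (List.mem_cons_of_mem f hg))
    obtain ⟨C, hC⟩ := h f List.mem_cons_self
    have hb : Bornology.IsBounded (Set.Icc (-C) C : Set ℝ) := Metric.isBounded_Icc _ _
    have hmem : ∀ n, (f ∘ φ) n ∈ Set.Icc (-C) C := fun n => abs_le.mp (hC (φ n))
    obtain ⟨L, _, ψ, hψ, hLψ⟩ := tendsto_subseq_of_bounded hb hmem
    refine ⟨φ ∘ ψ, hφ.comp hψ, ?_⟩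
    intro g hg
    rcases List.mem_cons.mp hg with rfl | hg
    · exact ⟨L, hLψ⟩
    · obtain ⟨L', hL'⟩ := hconv g hg
      exact ⟨L', hL'.comp hψ.tendsto_atTop⟩

lemma aux_pos_subseq {f : ℕ → ℝ} (hf0 : ∀ n, 0 ≤ f n) {C : ℝ} (hC : ∀ n, |f n| ≤ C)
    (h : ¬ Tendsto f atTop (nhds 0)) :
    ∃ t : ℝ, 0 < t ∧ ∃ φ : ℕ → ℕ, StrictMono φ ∧ Tendsto (f ∘ φ) atTop (nhds t) := by
  have hfreq : ∃ ε > (0:ℝ), ∃ᶠ n in atTop, ε ≤ f n := by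
    by_contra hcon
    push_neg at hcon
    apply h
    rw [Metric.tendsto_atTop]
    intro ε hε
    have h2 : ∀ᶠ n in atTop, f n < ε := by
      have := hcon ε hε
      filter_upwards [this] with n hn
      exact hn
    obtain ⟨N, hN⟩ := h2.exists_forall_of_atTop
    exact ⟨N, fun n hn => by
      rw [Real.dist_eq, sub_zero, abs_of_nonneg (hf0 n)]
      exact hN n hn⟩
  obtain ⟨ε, hε, hfr⟩ := hfreq
  obtain ⟨ψ, hψ, hψε⟩ := Filter.extraction_of_frequently_atTop hfr
  have hmem : ∀ n, (f ∘ ψ) n ∈ Set.Icc (-C) C := fun n => abs_le.mp (hC (ψ n))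
  obtain ⟨L, _, χ, hχ, hLχ⟩ := tendsto_subseq_of_bounded (Metric.isBounded_Icc (-C) C) hmem
  refine ⟨L, ?_, ψ ∘ χ, hψ.comp hχ, hLχ⟩
  have : ε ≤ L := ge_of_tendsto' hLχ (fun n => hψε (χ n))
  linarith

lemma scalingSeq_comp {r : ℕ → ℝ} (hr : ScalingSeq r) {φ : ℕ → ℕ} (hφ : StrictMono φ) :
    ScalingSeq (r ∘ φ) :=
  ⟨fun n => hr.1 (φ n), hr.2.comp hφ.tendsto_atTop⟩

lemma seqInf_comp {X : Type*} [MetricSpace X] {r : ℕ → ℝ} {p : X} {x : ℕ → X}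
    (hx : x ∈ SeqInf r p) {φ : ℕ → ℕ} (hφ : StrictMono φ) : (x ∘ φ) ∈ SeqInf (r ∘ φ) p :=
  ⟨hx.1.comp hφ.tendsto_atTop, hx.2.imp fun _L hL => hL.comp hφ.tendsto_atTop⟩

lemma aux_adjacent {X : Type*} [MetricSpace X] {r : ℕ → ℝ} (hr : ∀ n, 0 < r n) {p : X}
    {x y : ℕ → X} (hx : x ∈ SeqInf r p) (hy : y ∈ SeqInf r p)
    (hxy : MutuallyStable r x y) (hne : classOf r p x ≠ classOf r p y) :
    AdjacentCl r p (classOf r p x) (classOf r p y) := by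
  refine ⟨⟨x, hx, rfl⟩, ⟨y, hy, rfl⟩, hne, ?_⟩
  rintro x' ⟨hx', hex⟩ y' ⟨hy', hey⟩
  obtain ⟨L, hL⟩ := hxy
  refine ⟨L, ?_⟩
  have h1 : Tendsto (fun n => dist (x' n) (y n) / r n) atTop (nhds L) :=
    aux_transfer hr hex hL
  have h2 : Tendsto (fun n => dist (y n) (x' n) / r n) atTop (nhds L) := by
    simp only [dist_comm] at h1 ⊢; exact h1
  have h3 := aux_transfer hr hey h2
  simp only [dist_comm] at h3 ⊢; exact h3



lemma aux_card_not_le {α : Type u} {S : Set α} {n : ℕ} (f : Fin (n+1) → S)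
    (hf : Function.Injective f) : ¬ (Cardinal.mk ↥S ≤ (n : Cardinal)) := by
  intro hle
  have h1 : Cardinal.lift.{u} (Cardinal.mk (Fin (n+1))) ≤ Cardinal.lift.{0} (Cardinal.mk ↥S) :=
    Cardinal.lift_mk_le'.mpr ⟨⟨f, hf⟩⟩
  simp only [Cardinal.mk_fin, Cardinal.lift_natCast, Cardinal.lift_uzero] at h1
  have h2 := h1.trans hle
  norm_cast at h2
  omega

lemma aux_card_exists {α : Type u} {S : Set α} {n : ℕ}
    (h : ¬ Cardinal.mk ↥S ≤ (n : Cardinal)) :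
    ∃ f : Fin (n+1) → S, Function.Injective f := by
  have h2 : (n : Cardinal) < Cardinal.mk ↥S := not_le.mp h
  have h1 : ((n : Cardinal) + 1) ≤ Cardinal.mk ↥S :=
    (Cardinal.add_one_le_succ _).trans (Order.succ_le_of_lt h2)
  have h3 : Nonempty (Fin (n+1) ↪ ↥S) := by
    rw [← Cardinal.lift_mk_le']
    simpa [Cardinal.mk_fin, Cardinal.lift_natCast, Cardinal.lift_uzero] using h1
  obtain ⟨e⟩ := h3
  exact ⟨e, e.injective⟩

lemma aux_forward {X : Type*} [MetricSpace X] {r : ℕ → ℝ} (hr : ScalingSeq r) {p : X}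
    {x y : ℕ → X} (hx : x ∈ SeqInf r p) (hy : y ∈ SeqInf r p) {c : ℝ}
    (hLx : Tendsto (fun m => dist (x m) p / r m) atTop (nhds c))
    (hLy : Tendsto (fun m => dist (y m) p / r m) atTop (nhds c))
    (hne : ¬ EquivSeq r x y) (n : ℕ) :
    ∃ r' : ℕ → ℝ, ScalingSeq r' ∧ ∃ w : Fin (n+1) → ℕ → X,
      (∀ i, w i ∈ SeqInf r' p) ∧
      ∀ i j : Fin (n+1), i ≠ j → ¬ EquivSeq r' (w i) (w j) := by
  obtain ⟨Cx, hCx⟩ := aux_bdd_of_tendsto hLx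
  obtain ⟨Cy, hCy⟩ := aux_bdd_of_tendsto hLy
  have hf0 : ∀ m, 0 ≤ dist (x m) (y m) / r m :=
    fun m => div_nonneg dist_nonneg (hr.1 m).le
  have hfb : ∀ m, |dist (x m) (y m) / r m| ≤ Cx + Cy := by
    intro m
    rw [abs_of_nonneg (hf0 m)]
    have h1 : dist (x m) (y m) / r m ≤ dist (x m) p / r m + dist (y m) p / r m := by
      rw [← add_div]
      exact div_le_div_of_nonneg_right (dist_triangle_right (x m) (y m) p) (hr.1 m).le
    refine h1.trans (add_le_add ?_ ?_)
    · exact (le_abs_self _).trans (hCx m)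
    · exact (le_abs_self _).trans (hCy m)
  obtain ⟨t, ht, φ, hφ, htend⟩ := aux_pos_subseq hf0 hfb hne
  refine ⟨r ∘ φ, scalingSeq_comp hr hφ, ?_⟩
  have hLx' : Tendsto (fun m => dist (x (φ m)) p / r (φ m)) atTop (nhds c) :=
    hLx.comp hφ.tendsto_atTop
  have hLy' : Tendsto (fun m => dist (y (φ m)) p / r (φ m)) atTop (nhds c) :=
    hLy.comp hφ.tendsto_atTop
  refine ⟨fun i m => if m % (n+1) < (i : ℕ) then y (φ m) else x (φ m), ?_, ?_⟩
  · intro i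
    constructor
    · have he : (fun m => dist (if m % (n+1) < (i:ℕ) then y (φ m) else x (φ m)) p)
          = fun m => if m % (n+1) < (i:ℕ) then dist (y (φ m)) p else dist (x (φ m)) p := by
        funext m; by_cases hm : m % (n+1) < (i:ℕ) <;> simp [hm]
      rw [he]
      exact aux_ite_tendsto_atTop (hy.1.comp hφ.tendsto_atTop) (hx.1.comp hφ.tendsto_atTop)
    · refine ⟨c, ?_⟩
      show Tendsto (fun m => dist (if m % (n+1) < (i:ℕ) then y (φ m) else x (φ m)) p / r (φ m))
        atTop (nhds c)
      have he : (fun m => dist (if m % (n+1) < (i:ℕ) then y (φ m) else x (φ m)) p / r (φ m))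
          = fun m => if m % (n+1) < (i:ℕ) then dist (y (φ m)) p / r (φ m)
            else dist (x (φ m)) p / r (φ m) := by
        funext m; by_cases hm : m % (n+1) < (i:ℕ) <;> simp [hm]
      rw [he]
      exact aux_ite_tendsto hLy' hLx'
  · have key : ∀ i j : Fin (n+1), (i : ℕ) < (j : ℕ) →
        ¬ EquivSeq (r ∘ φ) (fun m => if m % (n+1) < (i:ℕ) then y (φ m) else x (φ m))
          (fun m => if m % (n+1) < (j:ℕ) then y (φ m) else x (φ m)) := by
      intro i j hij heq
      set ψ : ℕ → ℕ := fun k => (i : ℕ) + (n+1) * k with hψ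
      have hψmono : StrictMono ψ := by
        intro a b hab
        have h5 : (n+1) * a < (n+1) * b := Nat.mul_lt_mul_of_pos_left hab (Nat.succ_pos n)
        simp only [hψ]
        omega
      have hmod : ∀ k, ψ k % (n+1) = (i : ℕ) := by
        intro k
        simp only [hψ]
        rw [Nat.add_mul_mod_self_left, Nat.mod_eq_of_lt i.isLt]
      have h1 := heq.comp hψmono.tendsto_atTop
      have h2 : (fun k => dist (if (ψ k) % (n+1) < (i:ℕ) then y (φ (ψ k)) else x (φ (ψ k)))
            (if (ψ k) % (n+1) < (j:ℕ) then y (φ (ψ k)) else x (φ (ψ k))) / r (φ (ψ k)))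
          = fun k => dist (x (φ (ψ k))) (y (φ (ψ k))) / r (φ (ψ k)) := by
        funext k
        rw [if_neg (by rw [hmod k]; omega), if_pos (by rw [hmod k]; exact hij)]
      have h3 : Tendsto (fun k => dist (x (φ (ψ k))) (y (φ (ψ k))) / r (φ (ψ k)))
          atTop (nhds 0) := by
        rw [← h2]
        exact h1
      have h4 : Tendsto (fun k => dist (x (φ (ψ k))) (y (φ (ψ k))) / r (φ (ψ k)))
          atTop (nhds t) := htend.comp hψmono.tendsto_atTop
      exact absurd (tendsto_nhds_unique h3 h4) (by linarith)
    intro i j hij heq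
    rcases lt_or_gt_of_ne (fun h : (i:ℕ) = (j:ℕ) => hij (Fin.ext h)) with h | h
    · exact key i j h heq
    · exact key j i h (equivSeq_symm heq)


/-- Theorem t2.2.6. `|V(G_{X,r̃})| ≤ n` for every scaling sequence
iff for every scaling sequence all cliques have at most `n` elements and the labeling
`ρ⁰` is injective. -/
theorem card_vertexSet_le_iff_clique_and_injective {X : Type*} [MetricSpace X]
    (hX : UnboundedSpace X) (p : X) (n : ℕ) (hn : 2 ≤ n) :
    (∀ r : ℕ → ℝ, ScalingSeq r → Cardinal.mk ↥(VertexSet r p) ≤ (n : Cardinal)) ↔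
      (∀ r : ℕ → ℝ, ScalingSeq r →
        (∀ C : Set (Set (ℕ → X)), IsCliqueCl r p C → Cardinal.mk ↥C ≤ (n : Cardinal)) ∧
        Set.InjOn (rho0 r p) (VertexSet r p)) := by
  constructor
  · intro hV r hr
    refine ⟨fun C hC => (Cardinal.mk_le_mk_of_subset hC.1).trans (hV r hr), ?_⟩
    intro u hu v hv heq
    by_contra hne
    obtain ⟨x, hx, rfl⟩ := hu
    obtain ⟨y, hy, rfl⟩ := hv
    obtain ⟨Lx, hLx⟩ := hx.2
    obtain ⟨Ly, hLy⟩ := hy.2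
    rw [rho0_classOf hr.1 hx hLx, rho0_classOf hr.1 hy hLy] at heq
    subst heq
    have hnequiv : ¬ EquivSeq r x y := fun he => hne ((classOf_eq_iff hr.1 hx hy).mpr he)
    obtain ⟨r', hr', w, hwSeq, hwne⟩ := aux_forward hr hx hy hLx hLy hnequiv n
    have hinj : Function.Injective (fun i : Fin (n+1) =>
        (⟨classOf r' p (w i), w i, hwSeq i, rfl⟩ : ↥(VertexSet r' p))) := by
      intro i j hij
      by_contra hij'
      apply hwne i j hij'
      have hceq : classOf r' p (w i) = classOf r' p (w j) := congrArg Subtype.val hij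
      exact (classOf_eq_iff hr'.1 (hwSeq i) (hwSeq j)).mp hceq
    exact aux_card_not_le _ hinj (hV r' hr')
  · intro h r hr
    by_contra hle
    obtain ⟨f, hf⟩ := aux_card_exists hle
    choose xx hxSeq hxcl using fun i => (f i).2
    choose L hL using fun i => (hxSeq i).2
    have hLne : ∀ i j, i ≠ j → L i ≠ L j := by
      intro i j hij hLeq
      apply hij
      apply hf
      apply Subtype.ext
      apply (h r hr).2 (f i).2 (f j).2
      rw [hxcl i, hxcl j, rho0_classOf hr.1 (hxSeq i) (hL i),
        rho0_classOf hr.1 (hxSeq j) (hL j)]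
      exact hLeq
    have hbdd : ∀ g ∈ (List.finRange (n+1)).flatMap (fun i => (List.finRange (n+1)).map
        (fun j => fun m => dist (xx i m) (xx j m) / r m)), ∃ C, ∀ m, |g m| ≤ C := by
      intro g hg
      rw [List.mem_flatMap] at hg
      obtain ⟨i, _, hg⟩ := hg
      rw [List.mem_map] at hg
      obtain ⟨j, _, rfl⟩ := hg
      obtain ⟨Ci, hCi⟩ := aux_bdd_of_tendsto (hL i)
      obtain ⟨Cj, hCj⟩ := aux_bdd_of_tendsto (hL j)
      refine ⟨Ci + Cj, fun m => ?_⟩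
      rw [abs_of_nonneg (div_nonneg dist_nonneg (hr.1 m).le)]
      have h1 : dist (xx i m) (xx j m) / r m
          ≤ dist (xx i m) p / r m + dist (xx j m) p / r m := by
        rw [← add_div]
        exact div_le_div_of_nonneg_right (dist_triangle_right _ _ p) (hr.1 m).le
      exact h1.trans (add_le_add ((le_abs_self _).trans (hCi m))
        ((le_abs_self _).trans (hCj m)))
    obtain ⟨φ, hφ, hconv⟩ := aux_subseq_list _ hbdd
    have hms : ∀ i j : Fin (n+1), MutuallyStable (r ∘ φ) (xx i ∘ φ) (xx j ∘ φ) := by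
      intro i j
      have hmem : (fun m => dist (xx i m) (xx j m) / r m)
          ∈ (List.finRange (n+1)).flatMap (fun i => (List.finRange (n+1)).map
            (fun j => fun m => dist (xx i m) (xx j m) / r m)) :=
        List.mem_flatMap.mpr ⟨i, List.mem_finRange i,
          List.mem_map.mpr ⟨j, List.mem_finRange j, rfl⟩⟩
      obtain ⟨Lij, hLij⟩ := hconv _ hmem
      exact ⟨Lij, hLij⟩
    have hr' := scalingSeq_comp hr hφ
    have hSeq' : ∀ i, (xx i ∘ φ) ∈ SeqInf (r ∘ φ) p := fun i => seqInf_comp (hxSeq i) hφ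
    have hL' : ∀ i, Tendsto (fun m => dist ((xx i ∘ φ) m) p / (r ∘ φ) m) atTop (nhds (L i)) :=
      fun i => (hL i).comp hφ.tendsto_atTop
    have hclne : ∀ i j : Fin (n+1), i ≠ j →
        classOf (r ∘ φ) p (xx i ∘ φ) ≠ classOf (r ∘ φ) p (xx j ∘ φ) := by
      intro i j hij hceq
      have he := (classOf_eq_iff hr'.1 (hSeq' i) (hSeq' j)).mp hceq
      have h2 := aux_transfer_pt hr'.1 he (hL' i)
      exact hLne i j hij (tendsto_nhds_unique h2 (hL' j))
    set C : Set (Set (ℕ → X)) :=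
      Set.range (fun i : Fin (n+1) => classOf (r ∘ φ) p (xx i ∘ φ)) with hCdef
    have hclique : IsCliqueCl (r ∘ φ) p C := by
      constructor
      · rintro v ⟨i, rfl⟩
        exact ⟨xx i ∘ φ, hSeq' i, rfl⟩
      · rintro u ⟨i, rfl⟩ v ⟨j, rfl⟩ huv
        exact aux_adjacent hr'.1 (hSeq' i) (hSeq' j) (hms i j) huv
    have hcard := (h (r ∘ φ) hr').1 C hclique
    have hinj : Function.Injective (fun i : Fin (n+1) =>
        (⟨classOf (r ∘ φ) p (xx i ∘ φ), ⟨i, rfl⟩⟩ : ↥C)) := by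
      intro i j hij
      by_contra hij'
      exact hclne i j hij' (congrArg Subtype.val hij)
    exact aux_card_not_le _ hinj hcard
end

section
/- Let (X,d) be an unbounded metric space, let r̃ be a scaling sequence, and let u*, v* be distinct non-adjacent vertices of the cluster graph G_{X,r̃}. If G_{X,r̃} is finite, then there exist two metrics d¹, d² ∈ M(ρ_X) on V(G_{X,r̃}) such that d¹(u*,v*) ≠ d²(u*,v*). -/
open Filter Topology
open scoped Classical

/-- `D` is a metric on the subset `S`. -/
def IsMetricOn {V : Type*} (S : Set V) (D : V → V → ℝ) : Prop :=
  (∀ u ∈ S, D u u = 0) ∧ (∀ u ∈ S, ∀ v ∈ S, u ≠ v → 0 < D u v) ∧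
  (∀ u ∈ S, ∀ v ∈ S, D u v = D v u) ∧
  (∀ u ∈ S, ∀ v ∈ S, ∀ z ∈ S, D u z ≤ D u v + D v z)

private lemma transfer_lemma' {X : Type*} [MetricSpace X] {r : ℕ → ℝ} (hr : ∀ n, 0 < r n)
    {x x' y y' : ℕ → X} {L : ℝ}
    (hx : EquivSeq r x x') (hy : EquivSeq r y y')
    (h : Tendsto (fun n => dist (x n) (y n) / r n) atTop (𝓝 L)) :
    Tendsto (fun n => dist (x' n) (y' n) / r n) atTop (𝓝 L) := by
  have h0 : Tendsto (fun n => dist (x' n) (y' n) / r n - dist (x n) (y n) / r n) atTop (𝓝 0) := by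
    apply squeeze_zero_norm (a := fun n => dist (x n) (x' n) / r n + dist (y n) (y' n) / r n)
    · intro n
      have hb := dist_dist_dist_le (x n) (y n) (x' n) (y' n)
      rw [Real.dist_eq] at hb
      rw [div_sub_div_same, Real.norm_eq_abs, abs_div, abs_of_pos (hr n), ← add_div,
        abs_sub_comm]
      exact div_le_div_of_nonneg_right hb (hr n).le
    · simpa using hx.add hy
  have h2 := h.add h0
  have he : (fun n => dist (x n) (y n) / r n + (dist (x' n) (y' n) / r n - dist (x n) (y n) / r n))
      = fun n => dist (x' n) (y' n) / r n := by funext n; ring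
  rw [he] at h2
  simpa using h2

private lemma equiv_trans' {X : Type*} [MetricSpace X] {r : ℕ → ℝ} (hr : ∀ n, 0 < r n)
    {x y z : ℕ → X} (h1 : EquivSeq r x y) (h2 : EquivSeq r y z) : EquivSeq r x z := by
  apply squeeze_zero (g := fun n => dist (x n) (y n) / r n + dist (y n) (z n) / r n)
    (fun n => div_nonneg dist_nonneg (hr n).le)
  · intro n
    rw [← add_div]
    exact div_le_div_of_nonneg_right (dist_triangle _ _ _) (hr n).le
  · simpa using h1.add h2

private lemma equiv_symm' {X : Type*} [MetricSpace X] {r : ℕ → ℝ}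
    {x y : ℕ → X} (h1 : EquivSeq r x y) : EquivSeq r y x := by
  simpa [EquivSeq, dist_comm] using h1

private lemma equiv_refl' {X : Type*} [MetricSpace X] (r : ℕ → ℝ) (x : ℕ → X) :
    EquivSeq r x x := by
  simp [EquivSeq, dist_self]

private lemma one_step' {f : ℕ → ℝ} (hf : ∃ C, ∀ᶠ n in atTop, |f n| ≤ C) :
    ∃ (ψ : ℕ → ℕ) (L : ℝ), StrictMono ψ ∧ Tendsto (fun k => f (ψ k)) atTop (𝓝 L) := by
  obtain ⟨C, hC⟩ := hf
  set C' := max C 0 with hC'def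
  have hC0 : (0:ℝ) ≤ C' := le_max_right _ _
  set f' : ℕ → ℝ := fun n => max (-C') (min (f n) C') with hf'def
  have hmem : ∀ n, f' n ∈ Set.Icc (-C') C' := by
    intro n
    exact ⟨le_max_left _ _, max_le (by linarith) (min_le_right _ _)⟩
  obtain ⟨L, -, ψ, hψ, hL⟩ := tendsto_subseq_of_bounded (Metric.isBounded_Icc (-C') C') hmem
  refine ⟨ψ, L, hψ, ?_⟩
  apply hL.congr'
  obtain ⟨N, hN⟩ := eventually_atTop.mp hC
  rw [Filter.EventuallyEq, eventually_atTop]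
  refine ⟨N, fun k hk => ?_⟩
  have hk' : N ≤ ψ k := le_trans hk (hψ.le_apply)
  have habs : |f (ψ k)| ≤ C' := le_trans (hN _ hk') (le_max_left _ _)
  obtain ⟨h1, h2⟩ := abs_le.mp habs
  simp only [Function.comp_apply, hf'def]
  rw [min_eq_left h2, max_eq_right h1]

private lemma ext_subseq' {I : Type*} (Q : Finset I) (f : I → ℕ → ℝ)
    (hb : ∀ i ∈ Q, ∃ C, ∀ᶠ n in atTop, |f i n| ≤ C) :
    ∃ ψ : ℕ → ℕ, StrictMono ψ ∧ ∀ i ∈ Q, ∃ L, Tendsto (fun k => f i (ψ k)) atTop (𝓝 L) := by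
  classical
  induction Q using Finset.induction_on with
  | empty => exact ⟨id, strictMono_id, by simp⟩
  | @insert i Q hi ih =>
      obtain ⟨ψ, hψ, hQ⟩ := ih (fun j hj => hb j (Finset.mem_insert_of_mem hj))
      obtain ⟨C, hC⟩ := hb i (Finset.mem_insert_self _ _)
      have hC' : ∀ᶠ k in atTop, |f i (ψ k)| ≤ C := hψ.tendsto_atTop.eventually hC
      obtain ⟨ψ', L, hψ', hL⟩ := one_step' ⟨C, hC'⟩
      refine ⟨ψ ∘ ψ', hψ.comp hψ', ?_⟩
      intro j hj
      rcases Finset.mem_insert.mp hj with rfl | hj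
      · exact ⟨L, hL⟩
      · obtain ⟨L', hL'⟩ := hQ j hj
        exact ⟨L', hL'.comp hψ'.tendsto_atTop⟩

/-- Lemma l2.2.15. If the cluster graph `G_{X,r̃}` is finite and
`u*, v*` are distinct non-adjacent vertices, then there are two metrics in `M(ρ_X)`
which differ at `(u*, v*)`. -/
theorem exists_two_metrics_of_nonadjacent {X : Type*} [MetricSpace X]
    (hX : UnboundedSpace X) (p : X) (r : ℕ → ℝ) (hr : ScalingSeq r)
    (hfin : (VertexSet r p).Finite)
    (u v : Set (ℕ → X)) (hu : u ∈ VertexSet r p) (hv : v ∈ VertexSet r p)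
    (hne : u ≠ v) (hnadj : ¬AdjacentCl r p u v) :
    ∃ D₁ D₂ : Set (ℕ → X) → Set (ℕ → X) → ℝ,
      IsMetricOn (VertexSet r p) D₁ ∧ IsMetricOn (VertexSet r p) D₂ ∧
      (∀ a b, AdjacentCl r p a b → D₁ a b = rhoX r a b) ∧
      (∀ a b, AdjacentCl r p a b → D₂ a b = rhoX r a b) ∧
      D₁ u v ≠ D₂ u v := by
  classical
  obtain ⟨hrpos, hrtop⟩ := hr
  have hrepex : ∀ a, a ∈ VertexSet r p → ∃ x, x ∈ SeqInf r p ∧ a = classOf r p x :=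
    fun a ha => ha
  haveI : Nonempty X := ⟨p⟩
  choose! rep hrepSeq hrepCl using hrepex
  have hmemrep : ∀ a, a ∈ VertexSet r p → rep a ∈ a := by
    intro a ha
    have h := hrepCl a ha
    nth_rewrite 1 [h]
    exact ⟨hrepSeq a ha, equiv_refl' r _⟩
  have hequiv : ∀ a, a ∈ VertexSet r p → ∀ x ∈ a, EquivSeq r (rep a) x := by
    intro a ha x hx
    rw [hrepCl a ha] at hx
    exact hx.2
  set g : Set (ℕ → X) → Set (ℕ → X) → ℕ → ℝ :=
    fun a b n => dist (rep a n) (rep b n) / r n with hgdef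
  have hgnn : ∀ a b n, 0 ≤ g a b n := fun a b n => div_nonneg dist_nonneg (hrpos n).le
  -- boundedness
  have hbound : ∀ a ∈ VertexSet r p, ∀ b ∈ VertexSet r p,
      ∃ C, ∀ᶠ n in atTop, |g a b n| ≤ C := by
    intro a ha b hb
    obtain ⟨-, La, hLa⟩ := hrepSeq a ha
    obtain ⟨-, Lb, hLb⟩ := hrepSeq b hb
    refine ⟨La + Lb + 1, ?_⟩
    have h1 : Tendsto (fun n => dist (rep a n) p / r n + dist (rep b n) p / r n)
        atTop (𝓝 (La + Lb)) := hLa.add hLb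
    have h2 : ∀ᶠ n in atTop,
        dist (rep a n) p / r n + dist (rep b n) p / r n < La + Lb + 1 :=
      h1.eventually (eventually_lt_nhds (by linarith))
    filter_upwards [h2] with n hn
    rw [abs_of_nonneg (hgnn a b n)]
    have htr : dist (rep a n) (rep b n) ≤ dist (rep a n) p + dist (rep b n) p := by
      rw [dist_comm (rep b n) p]
      exact dist_triangle _ _ _
    have : g a b n ≤ dist (rep a n) p / r n + dist (rep b n) p / r n := by
      simp only [hgdef]
      rw [← add_div]
      exact div_le_div_of_nonneg_right htr (hrpos n).le
    linarith
  -- adjacency facts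
  have hedge : ∀ a b, AdjacentCl r p a b →
      Tendsto (g a b) atTop (𝓝 (rhoX r a b)) ∧ 0 < rhoX r a b := by
    rintro a b ⟨ha, hb, hne', hst⟩
    obtain ⟨L, hL⟩ := hst _ (hmemrep a ha) _ (hmemrep b hb)
    have hLnn : (0:ℝ) ≤ L := ge_of_tendsto' hL (fun n => div_nonneg dist_nonneg (hrpos n).le)
    have hrho : rhoX r a b = L := by
      have hset : {L' : ℝ | ∃ x ∈ a, ∃ y ∈ b,
          Tendsto (fun n => dist (x n) (y n) / r n) atTop (𝓝 L')} = {L} := by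
        ext L'
        simp only [Set.mem_setOf_eq, Set.mem_singleton_iff]
        constructor
        · rintro ⟨x, hx, y, hy, hT⟩
          have hx' := equiv_symm' (hequiv a ha x hx)
          have hy' := equiv_symm' (hequiv b hb y hy)
          exact tendsto_nhds_unique (transfer_lemma' hrpos hx' hy' hT) hL
        · rintro rfl
          exact ⟨rep a, hmemrep a ha, rep b, hmemrep b hb, hL⟩
      rw [rhoX, hset, csSup_singleton]
    rw [hrho]
    refine ⟨hL, lt_of_le_of_ne hLnn ?_⟩
    intro h0
    apply hne'
    have heq : EquivSeq r (rep a) (rep b) := by rw [← h0] at hL; exact hL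
    rw [hrepCl a ha, hrepCl b hb]
    ext y
    simp only [classOf, Set.mem_setOf_eq]
    constructor
    · rintro ⟨h1, h2⟩; exact ⟨h1, equiv_trans' hrpos (equiv_symm' heq) h2⟩
    · rintro ⟨h1, h2⟩; exact ⟨h1, equiv_trans' hrpos heq h2⟩
  -- non-adjacency of u, v : g u v has no limit
  have hnoconv : ¬ ∃ L, Tendsto (g u v) atTop (𝓝 L) := by
    rintro ⟨L, hL⟩
    refine hnadj ⟨hu, hv, hne, fun x hx y hy => ⟨L, ?_⟩⟩
    exact transfer_lemma' hrpos (hequiv u hu x hx) (hequiv v hv y hy) hL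
  -- two distinct subsequential limits
  obtain ⟨ψ₁, L₁, hψ₁, hL₁⟩ := one_step' (hbound u hu v hv)
  have hnt : ¬ Tendsto (g u v) atTop (𝓝 L₁) := fun h => hnoconv ⟨L₁, h⟩
  rw [Metric.tendsto_atTop] at hnt
  push_neg at hnt
  obtain ⟨ε₀, hε₀, hfr⟩ := hnt
  have hfr' : ∃ᶠ n in atTop, ε₀ ≤ dist (g u v n) L₁ := by
    rw [frequently_atTop]
    intro N
    obtain ⟨n, hn1, hn2⟩ := hfr N
    exact ⟨n, hn1, hn2⟩
  obtain ⟨χ, hχ, hχd⟩ := Filter.extraction_of_frequently_atTop hfr'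
  have hbχ : ∃ C, ∀ᶠ k in atTop, |g u v (χ k)| ≤ C := by
    obtain ⟨C, hC⟩ := hbound u hu v hv
    exact ⟨C, hχ.tendsto_atTop.eventually hC⟩
  obtain ⟨ψ₂, L₂, hψ₂, hL₂⟩ := one_step' hbχ
  have hL₁₂ : L₁ ≠ L₂ := by
    have hd : Tendsto (fun k => dist (g u v (χ (ψ₂ k))) L₁) atTop (𝓝 (dist L₂ L₁)) :=
      hL₂.dist tendsto_const_nhds
    have hd2 : ε₀ ≤ dist L₂ L₁ := ge_of_tendsto' hd (fun k => hχd (ψ₂ k))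
    intro he
    rw [he, dist_self] at hd2
    linarith
  have hL₁nn : (0:ℝ) ≤ L₁ := ge_of_tendsto' hL₁ (fun k => hgnn u v _)
  have hL₂nn : (0:ℝ) ≤ L₂ := ge_of_tendsto' hL₂ (fun k => hgnn u v _)
  have hβ : 0 < max L₁ L₂ := by
    rcases lt_or_gt_of_ne hL₁₂ with h | h
    · exact lt_max_of_lt_right (lt_of_le_of_lt hL₁nn h)
    · exact lt_max_of_lt_left (lt_of_le_of_lt hL₂nn h)
  -- the threshold ε
  set T : Set ℝ := insert (max L₁ L₂)
    ((fun q : Set (ℕ → X) × Set (ℕ → X) => rhoX r q.1 q.2) ''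
      {q | AdjacentCl r p q.1 q.2}) with hTdef
  have hTfin : T.Finite := by
    apply Set.Finite.insert
    apply Set.Finite.image
    apply Set.Finite.subset (hfin.prod hfin)
    rintro ⟨a, b⟩ hab
    exact ⟨hab.1, hab.2.1⟩
  have hTne : T.Nonempty := ⟨_, Set.mem_insert _ _⟩
  have hTpos : ∀ w ∈ T, 0 < w := by
    intro w hw
    rcases Set.mem_insert_iff.mp hw with rfl | hw
    · exact hβ
    · obtain ⟨⟨a, b⟩, hab, rfl⟩ := hw
      exact (hedge a b hab).2
  have hmT : sInf T ∈ T := hTne.csInf_mem hTfin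
  have hmpos : 0 < sInf T := hTpos _ hmT
  set ε := sInf T / 2 with hεdef
  have hεpos : 0 < ε := by positivity
  have hεlt : ∀ w ∈ T, ε < w := by
    intro w hw
    have h1 : sInf T ≤ w := csInf_le hTfin.bddBelow hw
    rw [hεdef]
    linarith
  -- simultaneous subsequence extraction over all pairs of vertices
  set Q : Finset (Set (ℕ → X) × Set (ℕ → X)) := hfin.toFinset ×ˢ hfin.toFinset with hQdef
  have hQmem : ∀ a ∈ VertexSet r p, ∀ b ∈ VertexSet r p, (a, b) ∈ Q := by
    intro a ha b hb
    rw [hQdef, Finset.mem_product]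
    exact ⟨hfin.mem_toFinset.mpr ha, hfin.mem_toFinset.mpr hb⟩
  have hQb : ∀ (σ : ℕ → ℕ), StrictMono σ → ∀ q ∈ Q, ∃ C, ∀ᶠ n in atTop, |g q.1 q.2 (σ n)| ≤ C := by
    intro σ hσ q hq
    rw [hQdef, Finset.mem_product] at hq
    obtain ⟨C, hC⟩ := hbound q.1 (hfin.mem_toFinset.mp hq.1) q.2 (hfin.mem_toFinset.mp hq.2)
    exact ⟨C, hσ.tendsto_atTop.eventually hC⟩
  obtain ⟨θ₁, hθ₁, H₁⟩ := ext_subseq' Q (fun q n => g q.1 q.2 (ψ₁ n)) (hQb ψ₁ hψ₁)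
  obtain ⟨θ₂, hθ₂, H₂⟩ := ext_subseq' Q (fun q n => g q.1 q.2 (χ (ψ₂ n))) (hQb _ (hχ.comp hψ₂))
  set Φ₁ : ℕ → ℕ := fun k => ψ₁ (θ₁ k) with hΦ₁def
  set Φ₂ : ℕ → ℕ := fun k => χ (ψ₂ (θ₂ k)) with hΦ₂def
  have hΦ₁ : StrictMono Φ₁ := hψ₁.comp hθ₁
  have hΦ₂ : StrictMono Φ₂ := (hχ.comp hψ₂).comp hθ₂
  have hconv₁ : ∀ a ∈ VertexSet r p, ∀ b ∈ VertexSet r p,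
      ∃ L, 0 ≤ L ∧ Tendsto (fun k => g a b (Φ₁ k)) atTop (𝓝 L) := by
    intro a ha b hb
    obtain ⟨L, hL⟩ := H₁ (a, b) (hQmem a ha b hb)
    exact ⟨L, ge_of_tendsto' hL (fun k => hgnn a b _), hL⟩
  have hconv₂ : ∀ a ∈ VertexSet r p, ∀ b ∈ VertexSet r p,
      ∃ L, 0 ≤ L ∧ Tendsto (fun k => g a b (Φ₂ k)) atTop (𝓝 L) := by
    intro a ha b hb
    obtain ⟨L, hL⟩ := H₂ (a, b) (hQmem a ha b hb)
    exact ⟨L, ge_of_tendsto' hL (fun k => hgnn a b _), hL⟩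
  -- the generic construction
  have key : ∀ Φ : ℕ → ℕ, StrictMono Φ →
      (∀ a ∈ VertexSet r p, ∀ b ∈ VertexSet r p,
        ∃ L, 0 ≤ L ∧ Tendsto (fun k => g a b (Φ k)) atTop (𝓝 L)) →
      IsMetricOn (VertexSet r p)
        (fun a b => if a = b then 0 else max ε (limUnder atTop (fun k => g a b (Φ k)))) ∧
      ∀ a b, AdjacentCl r p a b →
        (fun a b => if a = b then 0 else max ε (limUnder atTop (fun k => g a b (Φ k)))) a b
          = rhoX r a b := by
    intro Φ hΦ hconv
    set D : Set (ℕ → X) → Set (ℕ → X) → ℝ :=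
      fun a b => if a = b then 0 else max ε (limUnder atTop (fun k => g a b (Φ k))) with hDdef
    have hDval : ∀ a ∈ VertexSet r p, ∀ b ∈ VertexSet r p, a ≠ b →
        ∃ L, 0 ≤ L ∧ Tendsto (fun k => g a b (Φ k)) atTop (𝓝 L) ∧ D a b = max ε L := by
      intro a ha b hb hab
      obtain ⟨L, hLnn, hL⟩ := hconv a ha b hb
      exact ⟨L, hLnn, hL, by simp only [hDdef, if_neg hab, hL.limUnder_eq]⟩
    have hDnn : ∀ a b, 0 ≤ D a b := by
      intro a b
      by_cases h : a = b
      · simp [hDdef, h]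
      · simp only [hDdef, if_neg h]
        exact le_trans hεpos.le (le_max_left _ _)
    constructor
    · refine ⟨?_, ?_, ?_, ?_⟩
      · intro a ha
        simp [hDdef]
      · intro a ha b hb hab
        simp only [hDdef, if_neg hab]
        exact lt_of_lt_of_le hεpos (le_max_left _ _)
      · intro a ha b hb
        by_cases h : a = b
        · simp [hDdef, h]
        · have hgs : (fun k => g a b (Φ k)) = fun k => g b a (Φ k) := by
            funext k
            simp only [hgdef]
            rw [dist_comm]
          simp only [hDdef, if_neg h, if_neg (Ne.symm h), hgs]
      · intro a ha b hb z hz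
        by_cases haz : a = z
        · subst haz
          have h0 : D a a = 0 := if_pos rfl
          rw [h0]
          exact add_nonneg (hDnn _ _) (hDnn _ _)
        by_cases hab : a = b
        · subst hab
          have h0 : D a a = 0 := if_pos rfl
          rw [h0, zero_add]
        by_cases hbz : b = z
        · subst hbz
          have h0 : D b b = 0 := if_pos rfl
          rw [h0, add_zero]
        obtain ⟨Lab, hLabnn, hTab, hDab⟩ := hDval a ha b hb hab
        obtain ⟨Lbz, hLbznn, hTbz, hDbz⟩ := hDval b hb z hz hbz
        obtain ⟨Laz, hLaznn, hTaz, hDaz⟩ := hDval a ha z hz haz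
        rw [hDab, hDbz, hDaz]
        have htri : Laz ≤ Lab + Lbz := by
          refine le_of_tendsto_of_tendsto' hTaz (hTab.add hTbz) ?_
          intro k
          simp only [hgdef]
          rw [← add_div]
          exact div_le_div_of_nonneg_right (dist_triangle _ _ _) (hrpos _).le
        apply max_le
        · calc ε ≤ max ε Lab := le_max_left _ _
            _ ≤ max ε Lab + max ε Lbz :=
              le_add_of_nonneg_right (le_trans hεpos.le (le_max_left _ _))
        · calc Laz ≤ Lab + Lbz := htri
            _ ≤ max ε Lab + max ε Lbz := add_le_add (le_max_right _ _) (le_max_right _ _)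
    · intro a b hadj
      obtain ⟨hT, hpos⟩ := hedge a b hadj
      have hab : a ≠ b := hadj.2.2.1
      have hsub : Tendsto (fun k => g a b (Φ k)) atTop (𝓝 (rhoX r a b)) :=
        hT.comp hΦ.tendsto_atTop
      have hmem : rhoX r a b ∈ T :=
        Set.mem_insert_iff.mpr (Or.inr ⟨(a, b), hadj, rfl⟩)
      simp only [hDdef, if_neg hab, hsub.limUnder_eq]
      exact max_eq_right (hεlt _ hmem).le
  obtain ⟨hM₁, hE₁⟩ := key Φ₁ hΦ₁ hconv₁
  obtain ⟨hM₂, hE₂⟩ := key Φ₂ hΦ₂ hconv₂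
  refine ⟨_, _, hM₁, hM₂, hE₁, hE₂, ?_⟩
  have h1uv : Tendsto (fun k => g u v (Φ₁ k)) atTop (𝓝 L₁) := hL₁.comp hθ₁.tendsto_atTop
  have h2uv : Tendsto (fun k => g u v (Φ₂ k)) atTop (𝓝 L₂) := hL₂.comp hθ₂.tendsto_atTop
  show (if u = v then (0:ℝ) else max ε (limUnder atTop (fun k => g u v (Φ₁ k)))) ≠
    (if u = v then (0:ℝ) else max ε (limUnder atTop (fun k => g u v (Φ₂ k))))
  rw [if_neg hne, if_neg hne, h1uv.limUnder_eq, h2uv.limUnder_eq]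
  have hεβ : ε < max L₁ L₂ := hεlt _ (Set.mem_insert _ _)
  rcases lt_or_gt_of_ne hL₁₂ with h | h
  · have h2 : ε < L₂ := by
      rw [max_eq_right h.le] at hεβ
      exact hεβ
    exact ne_of_lt (lt_of_lt_of_le (max_lt h2 h) (le_max_right _ _))
  · have h2 : ε < L₁ := by
      rw [max_eq_left h.le] at hεβ
      exact hεβ
    exact ne_of_gt (lt_of_lt_of_le (max_lt h2 h) (le_max_right _ _))
end

section
/- Let G=G(w) be a finite, connected, metrizable weighted graph. Then: (a) for every metric d∈M(w) and all distinct non-adjacent vertices μ, ν of G, the double inequality max_{P∈𝒫_{μ,ν}} (2 max_{e∈E(P)} w(e) − Σ_{e∈E(P)} w(e))₊ ≤ d(μ,ν) ≤ min_{P∈𝒫_{μ,ν}} Σ_{e∈E(P)} w(e) holds, where (·)₊ denotes the positive part; and (b) conversely, if μ and ν are distinct non-adjacent vertices of G and t is a positive real number satisfying max_{P∈𝒫_{μ,ν}} (2 max_{e∈E(P)} w(e) − Σ_{e∈E(P)} w(e))₊ ≤ t ≤ min_{P∈𝒫_{μ,ν}} Σ_{e∈E(P)} w(e), then there exists a metric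 d∈M(w) with d(μ,ν)=t. -/
open Filter Topology

/-- `D` belongs to `M(w)`: `D` is a metric on `V(G)` agreeing with the weight `w` on
every edge of `G`. -/
def GraphMetric {V : Type*} (G : SimpleGraph V) (w : Sym2 V → ℝ) (D : V → V → ℝ) : Prop :=
  (∀ u, D u u = 0) ∧ (∀ u v : V, u ≠ v → 0 < D u v) ∧ (∀ u v : V, D u v = D v u) ∧
  (∀ u v z : V, D u z ≤ D u v + D v z) ∧ ∀ u v : V, G.Adj u v → D u v = w s(u, v)

namespace MetricRangeAux

open SimpleGraph

variable {V : Type*}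

/-- Sum of weights along a walk. -/
def wsum (w : Sym2 V → ℝ) {G : SimpleGraph V} {u v : V} (p : G.Walk u v) : ℝ :=
  (p.edges.map w).sum

@[simp] lemma wsum_nil (w : Sym2 V → ℝ) {G : SimpleGraph V} {u : V} :
    wsum w (SimpleGraph.Walk.nil : G.Walk u u) = 0 := rfl

@[simp] lemma wsum_cons (w : Sym2 V → ℝ) {G : SimpleGraph V} {u v z : V} (h : G.Adj u v)
    (p : G.Walk v z) : wsum w (SimpleGraph.Walk.cons h p) = w s(u, v) + wsum w p := by
  simp [wsum]

@[simp] lemma wsum_append (w : Sym2 V → ℝ) {G : SimpleGraph V} {u v z : V} (p : G.Walk u v)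
    (q : G.Walk v z) : wsum w (p.append q) = wsum w p + wsum w q := by
  simp [wsum, SimpleGraph.Walk.edges_append]

@[simp] lemma wsum_reverse (w : Sym2 V → ℝ) {G : SimpleGraph V} {u v : V} (p : G.Walk u v) :
    wsum w p.reverse = wsum w p := by
  simp [wsum, SimpleGraph.Walk.edges_reverse, List.map_reverse, List.sum_reverse]

@[simp] lemma wsum_transfer (w : Sym2 V → ℝ) {G H : SimpleGraph V} {u v : V} (p : G.Walk u v)
    (hp : ∀ e ∈ p.edges, e ∈ H.edgeSet) : wsum w (p.transfer H hp) = wsum w p := by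
  simp [wsum, SimpleGraph.Walk.edges_transfer]

lemma wsum_nonneg {w : Sym2 V → ℝ} {G : SimpleGraph V} {u v : V} {p : G.Walk u v}
    (hw : ∀ e ∈ p.edges, 0 ≤ w e) : 0 ≤ wsum w p := by
  apply List.sum_nonneg
  intro x hx
  rcases List.mem_map.mp hx with ⟨e, he, rfl⟩
  exact hw e he

lemma wsum_pos {w : Sym2 V → ℝ} {G : SimpleGraph V} {u v : V} (p : G.Walk u v)
    (hw : ∀ e ∈ p.edges, 0 < w e) (hne : u ≠ v) : 0 < wsum w p := by
  cases p with
  | nil => exact absurd rfl hne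
  | cons h q =>
    rw [wsum_cons]
    have h1 : 0 < w s(u, _) := hw _ (by rw [SimpleGraph.Walk.edges_cons]; exact List.mem_cons_self)
    have h2 : 0 ≤ wsum w q := wsum_nonneg (fun e he => (hw e (by simp [he])).le)
    linarith

/-- A metric agreeing with `w` on edges is at most the weight of any walk. -/
lemma metric_le_wsum {G : SimpleGraph V} {w : Sym2 V → ℝ} {D : V → V → ℝ}
    (hD : GraphMetric G w D) : ∀ {u v : V} (p : G.Walk u v), D u v ≤ wsum w p := by
  obtain ⟨h0, _, hsymm, htri, hedge⟩ := hD
  intro u v p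
  induction p with
  | nil => simp [h0]
  | @cons a b c h q ih =>
    calc D a c ≤ D a b + D b c := htri a b c
    _ ≤ w s(a, b) + wsum w q := by rw [hedge a b h]; linarith
    _ = wsum w (SimpleGraph.Walk.cons h q) := by rw [wsum_cons]

lemma two_w_le {G : SimpleGraph V} {w : Sym2 V → ℝ} {D : V → V → ℝ}
    (hD : GraphMetric G w D) : ∀ {u v : V} (p : G.Walk u v) (e : Sym2 V), e ∈ p.edges →
      2 * w e ≤ D u v + wsum w p := by
  obtain ⟨h0, hpos, hsymm, htri, hedge⟩ := hD
  have hD' : GraphMetric G w D := ⟨h0, hpos, hsymm, htri, hedge⟩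
  intro u v p
  induction p with
  | nil => intro e he; simp at he
  | @cons a b c h q ih =>
    intro e he
    rw [SimpleGraph.Walk.edges_cons, List.mem_cons] at he
    rcases he with rfl | he
    · have h1 : D a b ≤ D a c + D c b := htri a c b
      have h2 : D c b ≤ wsum w q := by rw [hsymm c b]; exact metric_le_wsum hD' q
      have h3 : D a b = w s(a, b) := hedge a b h
      rw [wsum_cons]
      linarith
    · have h1 := ih e he
      have h2 : D b c ≤ D b a + D a c := htri b a c
      have h3 : D b a = w s(a, b) := by rw [hsymm b a]; exact hedge a b h
      rw [wsum_cons]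
      linarith

section Subset

lemma map_sum_le_of_subset {α : Type*} [DecidableEq α] (f : α → ℝ) :
    ∀ (l₁ l₂ : List α), l₁ ⊆ l₂ → l₁.Nodup → (∀ a ∈ l₂, 0 ≤ f a) →
      (l₁.map f).sum ≤ (l₂.map f).sum := by
  intro l₁
  induction l₁ with
  | nil => intro l₂ _ _ h0; simpa using List.sum_nonneg (by
      intro x hx; rcases List.mem_map.mp hx with ⟨a, ha, rfl⟩; exact h0 a ha)
  | cons a l ih =>
    intro l₂ hsub hnd h0
    have ha : a ∈ l₂ := hsub List.mem_cons_self
    have hperm : l₂.Perm (a :: l₂.erase a) := List.perm_cons_erase ha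
    have hsum : (l₂.map f).sum = f a + ((l₂.erase a).map f).sum := by
      rw [(hperm.map f).sum_eq]; simp
    have hsub' : l ⊆ l₂.erase a := by
      intro x hx
      have hxa : x ≠ a := fun hxy => (List.nodup_cons.mp hnd).1 (hxy ▸ hx)
      exact (List.mem_erase_of_ne hxa).mpr (hsub (List.mem_cons_of_mem a hx))
    have h0' : ∀ b ∈ l₂.erase a, 0 ≤ f b := fun b hb => h0 b (List.mem_of_mem_erase hb)
    have := ih (l₂.erase a) hsub' (List.nodup_cons.mp hnd).2 h0'
    simp only [List.map_cons, List.sum_cons, hsum]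
    linarith

end Subset

section Construction

variable (G : SimpleGraph V) (μ ν : V) (w : Sym2 V → ℝ) (t : ℝ)

/-- `G` together with the additional edge `{μ, ν}`. -/
def Gext : SimpleGraph V := G ⊔ SimpleGraph.fromEdgeSet {s(μ, ν)}

open Classical in
/-- `w` extended: the new edge has weight `t`. -/
noncomputable def wext : Sym2 V → ℝ :=
  fun e => if e = s(μ, ν) then t else w e

variable {G μ ν w t}

lemma gext_adj {a b : V} :
    (Gext G μ ν).Adj a b ↔ G.Adj a b ∨ (s(a, b) = s(μ, ν) ∧ a ≠ b) := by
  simp [Gext, SimpleGraph.fromEdgeSet_adj]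

lemma adj_of_ne {a b : V} (h : (Gext G μ ν).Adj a b) (hne : s(a, b) ≠ s(μ, ν)) : G.Adj a b := by
  rcases gext_adj.mp h with h' | ⟨h', _⟩
  · exact h'
  · exact absurd h' hne

lemma mem_edgeSet_of_ne {e : Sym2 V} (he : e ∈ (Gext G μ ν).edgeSet) (h : e ≠ s(μ, ν)) :
    e ∈ G.edgeSet := by
  induction e using Sym2.ind with
  | _ a b =>
    rw [SimpleGraph.mem_edgeSet] at he ⊢
    exact adj_of_ne he h

lemma wext_eq_of_ne {e : Sym2 V} (h : e ≠ s(μ, ν)) : wext μ ν w t e = w e := by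
  simp [wext, h]

lemma wext_self : wext μ ν w t s(μ, ν) = t := by
  simp [wext]

/-- Decomposition of a path in `Gext` through the new edge. -/
lemma decomp (hμν : μ ≠ ν) :
    ∀ {a b : V} (q : (Gext G μ ν).Walk a b), q.IsPath → s(μ, ν) ∈ q.edges →
      ∃ (x y : V) (_ : s(x, y) = s(μ, ν)) (q₁ : G.Walk a x) (q₂ : G.Walk y b),
        q₁.support ++ q₂.support = q.support ∧
        wsum (wext μ ν w t) q = wsum w q₁ + t + wsum w q₂ := by
  intro a b q
  induction q with
  | nil => intro _ h; simp at h
  | @cons a c b h p ih =>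
    intro hq he
    rw [SimpleGraph.Walk.edges_cons, List.mem_cons] at he
    have hpath : p.IsPath := hq.of_cons
    by_cases hac : s(a, c) = s(μ, ν)
    · -- the first edge is the new edge
      have hnot : s(μ, ν) ∉ p.edges := by
        intro hmem
        have := hq.isTrail.edges_nodup
        rw [SimpleGraph.Walk.edges_cons, List.nodup_cons] at this
        exact this.1 (hac ▸ hmem)
      have hpe : ∀ e ∈ p.edges, e ∈ G.edgeSet := by
        intro e hee
        refine mem_edgeSet_of_ne (SimpleGraph.Walk.edges_subset_edgeSet p hee) ?_
        intro heq; exact hnot (heq ▸ hee)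
      refine ⟨a, c, hac, SimpleGraph.Walk.nil, p.transfer G hpe, ?_, ?_⟩
      · simp [SimpleGraph.Walk.support_transfer]
      · rw [wsum_cons, hac, wext_self]
        have : wsum (wext μ ν w t) p = wsum w (p.transfer G hpe) := by
          rw [wsum_transfer]
          simp only [wsum]
          congr 1
          apply List.map_congr_left
          intro e hee
          exact wext_eq_of_ne (fun heq => hnot (heq ▸ hee))
        rw [this, wsum_nil]; ring
    · -- the new edge is in the tail
      have he' : s(μ, ν) ∈ p.edges := by
        rcases he with heq | he
        · exact absurd heq.symm hac
        · exact he
      obtain ⟨x, y, hxy, q₁, q₂, hsupp, hsum⟩ := ih hpath he'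
      have hG : G.Adj a c := adj_of_ne h hac
      refine ⟨x, y, hxy, SimpleGraph.Walk.cons hG q₁, q₂, ?_, ?_⟩
      · simp only [SimpleGraph.Walk.support_cons, List.cons_append, hsupp]
      · rw [wsum_cons, wsum_cons, wext_eq_of_ne hac, hsum]; ring

end Construction

end MetricRangeAux

open MetricRangeAux SimpleGraph

/-- Lemma l2.2.16. In a finite connected metrizable weighted graph,
for distinct non-adjacent `μ, ν`: (a) every `d ∈ M(w)` satisfies
`max_P (2 max_{e∈P} w(e) − Σ_{e∈P} w(e))₊ ≤ d(μ,ν) ≤ min_P Σ_{e∈P} w(e)`;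
(b) conversely, every positive `t` in that range is realized by some `d ∈ M(w)`. -/
theorem metric_range_on_nonadjacent {V : Type*} [Fintype V] (G : SimpleGraph V)
    (hconn : G.Connected) (w : Sym2 V → ℝ) (hw : ∀ e ∈ G.edgeSet, 0 ≤ w e)
    (hmet : ∃ D, GraphMetric G w D) :
    (∀ D, GraphMetric G w D → ∀ μ ν : V, μ ≠ ν → ¬G.Adj μ ν →
      ∀ W : G.Walk μ ν, W.IsPath →
        (∀ e ∈ W.edges, 2 * w e - (W.edges.map w).sum ≤ D μ ν) ∧
        D μ ν ≤ (W.edges.map w).sum) ∧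
    (∀ μ ν : V, μ ≠ ν → ¬G.Adj μ ν → ∀ t : ℝ, 0 < t →
      (∀ W : G.Walk μ ν, W.IsPath →
        (∀ e ∈ W.edges, 2 * w e - (W.edges.map w).sum ≤ t) ∧
        t ≤ (W.edges.map w).sum) →
      ∃ D, GraphMetric G w D ∧ D μ ν = t) := by
  classical
  obtain ⟨D₀, hD₀⟩ := hmet
  constructor
  · -- part (a)
    intro D hD μ ν hne hnadj W hW
    constructor
    · intro e he
      have := two_w_le hD W e he
      simp only [wsum] at this
      linarith
    · have := metric_le_wsum hD W
      simpa [wsum] using this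
  · -- part (b)
    intro μ ν hne hnadj t ht hyp
    set G' : SimpleGraph V := Gext G μ ν with hG'
    set w' : Sym2 V → ℝ := wext μ ν w t with hw'
    -- positivity of w' on edges of G'
    have hw'pos : ∀ e ∈ G'.edgeSet, 0 < w' e := by
      intro e he
      by_cases heq : e = s(μ, ν)
      · rw [heq]; rw [hw']; rw [wext_self]; exact ht
      · rw [hw', wext_eq_of_ne heq]
        have heG : e ∈ G.edgeSet := mem_edgeSet_of_ne he heq
        induction e using Sym2.ind with
        | _ a b =>
          rw [SimpleGraph.mem_edgeSet] at heG
          have h1 : D₀ a b = w s(a, b) := hD₀.2.2.2.2 a b heG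
          have h2 : 0 < D₀ a b := hD₀.2.1 a b heG.ne
          rw [← h1]; exact h2
    have hw'nonneg : ∀ e ∈ G'.edgeSet, 0 ≤ w' e := fun e he => (hw'pos e he).le
    have hle : G ≤ G' := le_sup_left
    have hconn' : G'.Connected := hconn.mono hle
    have hadjμν : G'.Adj μ ν := by
      rw [hG']
      exact gext_adj.mpr (Or.inr ⟨rfl, hne⟩)
    -- the candidate metric
    have hPathNE : ∀ u v : V, Nonempty (G'.Path u v) := fun u v =>
      (hconn'.preconnected u v).elim_path fun p => ⟨p⟩
    set S : V → V → Set ℝ := fun u v => Set.range (fun p : G'.Path u v => wsum w' p.val)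
      with hS
    have hSne : ∀ u v, (S u v).Nonempty := fun u v => Set.range_nonempty _
    have hSfin : ∀ u v, (S u v).Finite := fun u v => Set.finite_range _
    have hSbdd : ∀ u v, BddBelow (S u v) := fun u v => (hSfin u v).bddBelow
    have hS0 : ∀ u v, ∀ x ∈ S u v, (0:ℝ) ≤ x := by
      rintro u v x ⟨p, rfl⟩
      exact wsum_nonneg fun e he => hw'nonneg e (SimpleGraph.Walk.edges_subset_edgeSet _ he)
    set D : V → V → ℝ := fun u v => sInf (S u v) with hD
    have hmem : ∀ u v : V, ∃ p : G'.Path u v, wsum w' p.val = D u v := fun u v =>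
      (hSne u v).csInf_mem (hSfin u v)
    -- D is ≤ the weight of every walk in G'
    have hDle : ∀ (u v : V) (p : G'.Walk u v), D u v ≤ wsum w' p := by
      intro u v p
      have h1 : D u v ≤ wsum w' p.bypass :=
        csInf_le (hSbdd u v) ⟨⟨p.bypass, p.bypass_isPath⟩, rfl⟩
      refine h1.trans ?_
      simp only [wsum]
      exact map_sum_le_of_subset w' _ _ p.edges_bypass_subset p.bypass_isPath.isTrail.edges_nodup
        (fun e he => hw'nonneg e (SimpleGraph.Walk.edges_subset_edgeSet _ he))
    have hD0 : ∀ u, D u u = 0 := by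
      intro u
      refine le_antisymm ?_ (le_csInf (hSne u u) (hS0 u u))
      have : (0:ℝ) ∈ S u u := ⟨⟨SimpleGraph.Walk.nil, SimpleGraph.Walk.IsPath.nil⟩, rfl⟩
      exact csInf_le (hSbdd u u) this
    have hDpos : ∀ u v, u ≠ v → 0 < D u v := by
      intro u v huv
      obtain ⟨p, hp⟩ := hmem u v
      rw [← hp]
      exact wsum_pos p.val
        (fun e he => hw'pos e (SimpleGraph.Walk.edges_subset_edgeSet _ he)) huv
    have hDsymm : ∀ u v, D u v = D v u := by
      have key : ∀ u v : V, D u v ≤ D v u := by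
        intro u v
        obtain ⟨p, hp⟩ := hmem v u
        calc D u v ≤ wsum w' p.val.reverse := hDle u v p.val.reverse
        _ = wsum w' p.val := wsum_reverse w' p.val
        _ = D v u := hp
      exact fun u v => le_antisymm (key u v) (key v u)
    have hDtri : ∀ u v z, D u z ≤ D u v + D v z := by
      intro u v z
      obtain ⟨p, hp⟩ := hmem u v
      obtain ⟨q, hq⟩ := hmem v z
      calc D u z ≤ wsum w' (p.val.append q.val) := hDle u z _
      _ = wsum w' p.val + wsum w' q.val := wsum_append w' p.val q.val
      _ = D u v + D v z := by rw [hp, hq]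
    -- key lower bound: every path in G' between endpoints of a G-edge weighs at least the edge
    have hkey : ∀ (a b : V), G.Adj a b → ∀ q : G'.Walk a b, q.IsPath → w s(a, b) ≤ wsum w' q := by
      intro a b hab q hq
      by_cases hmemq : s(μ, ν) ∈ q.edges
      · obtain ⟨x, y, hxy, q₁, q₂, hsupp, hsum⟩ := decomp (w := w) (t := t) hne q hq hmemq
        have hnd : (q₁.support ++ q₂.support).Nodup := by
          rw [hsupp]; exact hq.support_nodup
        have hnd1 : q₁.support.Nodup := (List.nodup_append'.mp hnd).1
        have hnd2 : q₂.support.Nodup := (List.nodup_append'.mp hnd).2.1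
        have hdisj : q₁.support.Disjoint q₂.support := (List.nodup_append'.mp hnd).2.2
        rcases Sym2.eq_iff.mp hxy with ⟨rfl, rfl⟩ | ⟨rfl, rfl⟩
        · -- q₁ : a → μ, q₂ : ν → b
          set W := q₁.reverse.append (SimpleGraph.Walk.cons hab q₂.reverse) with hW
          have hWsupp : W.support = q₁.support.reverse ++ q₂.support.reverse := by
            rw [hW, SimpleGraph.Walk.support_append, SimpleGraph.Walk.support_reverse,
              SimpleGraph.Walk.support_cons, SimpleGraph.Walk.support_reverse]
            simp
          have hWpath : W.IsPath := by
            rw [SimpleGraph.Walk.isPath_def, hWsupp, List.nodup_append']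
            refine ⟨List.nodup_reverse.mpr hnd1, List.nodup_reverse.mpr hnd2, ?_⟩
            intro x hx hx2
            exact hdisj (List.mem_reverse.mp hx) (List.mem_reverse.mp hx2)
          have hWedges : W.edges = q₁.reverse.edges ++ (s(a, b) :: q₂.reverse.edges) := by
            rw [hW, SimpleGraph.Walk.edges_append, SimpleGraph.Walk.edges_cons]
          have hWsum : (W.edges.map w).sum = wsum w q₁ + w s(a, b) + wsum w q₂ := by
            have : (W.edges.map w).sum = wsum w W := rfl
            rw [this, hW, wsum_append, wsum_cons, wsum_reverse, wsum_reverse]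
            ring
          have hmemW : s(a, b) ∈ W.edges := by rw [hWedges]; simp
          have := (hyp W hWpath).1 s(a, b) hmemW
          rw [hWsum] at this
          rw [hsum]
          linarith
        · -- q₁ : a → ν, q₂ : μ → b
          set W := q₂.append (SimpleGraph.Walk.cons hab.symm q₁) with hW
          have hWsupp : W.support = q₂.support ++ q₁.support := by
            rw [hW, SimpleGraph.Walk.support_append, SimpleGraph.Walk.support_cons]
            simp
          have hWpath : W.IsPath := by
            rw [SimpleGraph.Walk.isPath_def, hWsupp, List.nodup_append']
            exact ⟨hnd2, hnd1, hdisj.symm⟩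
          have hWsum : (W.edges.map w).sum = wsum w q₂ + w s(b, a) + wsum w q₁ := by
            have : (W.edges.map w).sum = wsum w W := rfl
            rw [this, hW, wsum_append, wsum_cons]
            ring
          have hmemW : s(a, b) ∈ W.edges := by
            rw [hW, SimpleGraph.Walk.edges_append, SimpleGraph.Walk.edges_cons]
            simp [Sym2.eq_swap]
          have := (hyp W hWpath).1 s(a, b) hmemW
          rw [hWsum] at this
          have hswap : (s(b, a) : Sym2 V) = s(a, b) := Sym2.eq_swap
          rw [hswap] at this
          rw [hsum]
          linarith
      · -- q avoids the new edge: it is a walk in G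
        have hqe : ∀ e ∈ q.edges, e ∈ G.edgeSet := by
          intro e he
          refine mem_edgeSet_of_ne (SimpleGraph.Walk.edges_subset_edgeSet q he) ?_
          intro heq; exact hmemq (heq ▸ he)
        have hsum : wsum w' q = wsum w (q.transfer G hqe) := by
          rw [wsum_transfer]
          simp only [wsum]
          congr 1
          apply List.map_congr_left
          intro e he
          exact wext_eq_of_ne (fun heq => hmemq (heq ▸ he))
        rw [hsum]
        have h1 : D₀ a b ≤ wsum w (q.transfer G hqe) := metric_le_wsum hD₀ _
        have h2 : D₀ a b = w s(a, b) := hD₀.2.2.2.2 a b hab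
        linarith
    -- D agrees with w on edges of G
    have hDedge : ∀ u v : V, G.Adj u v → D u v = w s(u, v) := by
      intro u v huv
      have hadj' : G'.Adj u v := hle huv
      have hsingle : SimpleGraph.Walk.IsPath (SimpleGraph.Walk.cons hadj' SimpleGraph.Walk.nil) := by
        simp [SimpleGraph.Walk.isPath_def, huv.ne]
      have hne' : s(u, v) ≠ s(μ, ν) := by
        intro heq
        rcases Sym2.eq_iff.mp heq with ⟨rfl, rfl⟩ | ⟨rfl, rfl⟩
        · exact hnadj huv
        · exact hnadj huv.symm
      refine le_antisymm ?_ ?_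
      · have h1 : D u v ≤ wsum w' (SimpleGraph.Walk.cons hadj' SimpleGraph.Walk.nil) :=
          csInf_le (hSbdd u v) ⟨⟨_, hsingle⟩, rfl⟩
        rw [wsum_cons, wsum_nil] at h1
        rw [hw', wext_eq_of_ne hne'] at h1
        linarith
      · refine le_csInf (hSne u v) ?_
        rintro x ⟨p, rfl⟩
        exact hkey u v huv p.val p.prop
    -- D μ ν = t
    have hDμν : D μ ν = t := by
      have hedgepath : SimpleGraph.Walk.IsPath (SimpleGraph.Walk.cons hadjμν SimpleGraph.Walk.nil) := by
        simp [SimpleGraph.Walk.isPath_def, hne]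
      refine le_antisymm ?_ ?_
      · have h1 : D μ ν ≤ wsum w' (SimpleGraph.Walk.cons hadjμν SimpleGraph.Walk.nil) :=
          csInf_le (hSbdd μ ν) ⟨⟨_, hedgepath⟩, rfl⟩
        rw [wsum_cons, wsum_nil] at h1
        rw [hw'] at h1
        rw [wext_self] at h1
        linarith
      · refine le_csInf (hSne μ ν) ?_
        rintro x ⟨p, rfl⟩
        show t ≤ wsum w' p.val
        by_cases hmemq : s(μ, ν) ∈ p.val.edges
        · obtain ⟨x', y', hxy, q₁, q₂, hsupp, hsum⟩ := decomp (w := w) (t := t) hne p.val p.prop hmemq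
          have h1 : 0 ≤ wsum w q₁ := wsum_nonneg
            (fun e he => hw e (SimpleGraph.Walk.edges_subset_edgeSet _ he))
          have h2 : 0 ≤ wsum w q₂ := wsum_nonneg
            (fun e he => hw e (SimpleGraph.Walk.edges_subset_edgeSet _ he))
          rw [hsum]
          linarith
        · have hqe : ∀ e ∈ p.val.edges, e ∈ G.edgeSet := by
            intro e he
            refine mem_edgeSet_of_ne (SimpleGraph.Walk.edges_subset_edgeSet p.val he) ?_
            intro heq; exact hmemq (heq ▸ he)
          have hsum : wsum w' p.val = wsum w (p.val.transfer G hqe) := by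
            rw [wsum_transfer]
            simp only [wsum]
            congr 1
            apply List.map_congr_left
            intro e he
            exact wext_eq_of_ne (fun heq => hmemq (heq ▸ he))
          have hpath' : (p.val.transfer G hqe).IsPath := p.prop.transfer hqe
          have := (hyp _ hpath').2
          rw [hsum]
          simpa [wsum] using this
    exact ⟨D, ⟨hD0, hDpos, hDsymm, hDtri, hDedge⟩, hDμν⟩
end

section
/- Let C=C(w) be a weighted cycle with w(e)>0 for every edge e of C and such that Σ_{e∈E(C)} w(e) = 2 max_{e∈E(C)} w(e). Then C(w) is metrizable, and for every pair μ, ν of distinct non-adjacent vertices of C, all metrics d∈M(w) assign the same value to d(μ,ν); consequently the graph Ĉ obtained from C by adding as edges all pairs in E^{un}(C) is a complete graph. -/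
open Filter Topology
open Fin.NatCast

/-- `G` is a cycle graph: its vertices can be numbered `0, …, n−1` (with `n ≥ 3`) so
that adjacency is exactly cyclic consecutiveness. -/
def IsCycleGraph {V : Type*} [Fintype V] (G : SimpleGraph V) : Prop :=
  ∃ n : ℕ, 3 ≤ n ∧ ∃ e : V ≃ Fin n, ∀ u v : V,
    G.Adj u v ↔ ((e u).val + 1) % n = (e v).val ∨ ((e v).val + 1) % n = (e u).val

/-- Weight of the `k`-th edge around the cycle. -/
private def cW {V : Type*} {n : ℕ} [NeZero n] (g : Fin n → V) (w : Sym2 V → ℝ) (k : ℕ) : ℝ :=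
  w s(g (k : Fin n), g ((k : Fin n) + 1))

/-- Cumulative coordinate of a vertex along the cycle. -/
private def cX {V : Type*} {n : ℕ} [NeZero n] (f : V ≃ Fin n) (w : Sym2 V → ℝ) (v : V) : ℝ :=
  ∑ k ∈ Finset.range (f v).val, cW f.symm w k

private theorem aux_metr {V : Type*} {n : ℕ} [NeZero n] (G : SimpleGraph V)
    (hn : 3 ≤ n) (f : V ≃ Fin n)
    (hadj : ∀ u v : V, G.Adj u v ↔ f u + 1 = f v ∨ f v + 1 = f u)
    (w : Sym2 V → ℝ)
    (hw : ∀ u v : V, G.Adj u v → 0 < w s(u, v))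
    (hs : ∑ k ∈ Finset.range (n - 1), cW f.symm w k = cW f.symm w (n - 1)) :
    GraphMetric G w (fun u v => |cX f w u - cX f w v|) ∧
      ∀ D, GraphMetric G w D → ∀ u v : V, D u v = |cX f w u - cX f w v| := by
  have hgadj : ∀ i : Fin n, G.Adj (f.symm i) (f.symm (i + 1)) := by
    intro i
    rw [hadj]
    left
    rw [Equiv.apply_symm_apply, Equiv.apply_symm_apply]
  have hcast : ∀ k : ℕ, ((k + 1 : ℕ) : Fin n) = (k : Fin n) + 1 := by
    intro k; push_cast; ring
  have hWadj : ∀ k : ℕ, G.Adj (f.symm (k : Fin n)) (f.symm ((k + 1 : ℕ) : Fin n)) := by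
    intro k; rw [hcast]; exact hgadj _
  have hWpos : ∀ k : ℕ, 0 < cW f.symm w k := fun k => hw _ _ (hgadj _)
  -- upper bound lemma
  have ub : ∀ D, GraphMetric G w D → ∀ j i : ℕ, i ≤ j →
      D (f.symm (i : Fin n)) (f.symm (j : Fin n)) ≤ ∑ k ∈ Finset.Ico i j, cW f.symm w k := by
    intro D hD j
    have hDedge : ∀ k : ℕ, D (f.symm (k : Fin n)) (f.symm ((k + 1 : ℕ) : Fin n))
        = cW f.symm w k := by
      intro k
      rw [hD.2.2.2.2 _ _ (hWadj k)]
      simp only [cW, hcast]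
    induction j with
    | zero =>
      intro i hi
      have : i = 0 := Nat.le_zero.mp hi
      subst this
      simp [hD.1]
    | succ j ih =>
      intro i hi
      rcases Nat.lt_or_ge i (j + 1) with h | h
      · have hij : i ≤ j := by omega
        calc D (f.symm (i : Fin n)) (f.symm ((j + 1 : ℕ) : Fin n))
            ≤ D (f.symm (i : Fin n)) (f.symm (j : Fin n))
              + D (f.symm (j : Fin n)) (f.symm ((j + 1 : ℕ) : Fin n)) := hD.2.2.2.1 _ _ _
          _ ≤ (∑ k ∈ Finset.Ico i j, cW f.symm w k) + cW f.symm w j := by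
              have := ih i hij
              have := hDedge j
              linarith
          _ = ∑ k ∈ Finset.Ico i (j + 1), cW f.symm w k :=
              (Finset.sum_Ico_succ_top hij _).symm
      · have : i = j + 1 := by omega
        subst this
        simp [hD.1]
  -- cast facts
  have h1 : ((n - 1 : ℕ) : Fin n) + 1 = 0 := by
    rw [← hcast (n - 1)]
    have hne : n - 1 + 1 = n := by omega
    rw [hne, Fin.natCast_self]
  have hadj0 : G.Adj (f.symm ((n - 1 : ℕ) : Fin n)) (f.symm 0) := by
    have := hgadj ((n - 1 : ℕ) : Fin n)
    rwa [h1] at this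
  have hcWlast : cW f.symm w (n - 1) = w s(f.symm ((n - 1 : ℕ) : Fin n), f.symm 0) := by
    simp only [cW, h1]
  have hedge0 : ∀ D, GraphMetric G w D →
      D (f.symm ((0 : ℕ) : Fin n)) (f.symm ((n - 1 : ℕ) : Fin n)) = cW f.symm w (n - 1) := by
    intro D hD
    have h0 : ((0 : ℕ) : Fin n) = 0 := by norm_num
    rw [h0, hD.2.2.1, hD.2.2.2.2 _ _ hadj0, hcWlast]
  -- lower bound lemma
  have lb : ∀ D, GraphMetric G w D → ∀ i j : ℕ, i ≤ j → j ≤ n - 1 →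
      ∑ k ∈ Finset.Ico i j, cW f.symm w k ≤ D (f.symm (i : Fin n)) (f.symm (j : Fin n)) := by
    intro D hD i j hij hj
    have t1 : D (f.symm ((0 : ℕ) : Fin n)) (f.symm ((n - 1 : ℕ) : Fin n))
        ≤ D (f.symm ((0 : ℕ) : Fin n)) (f.symm (i : Fin n))
          + (D (f.symm (i : Fin n)) (f.symm (j : Fin n))
            + D (f.symm (j : Fin n)) (f.symm ((n - 1 : ℕ) : Fin n))) := by
      calc D (f.symm ((0 : ℕ) : Fin n)) (f.symm ((n - 1 : ℕ) : Fin n))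
          ≤ D (f.symm ((0 : ℕ) : Fin n)) (f.symm (i : Fin n))
            + D (f.symm (i : Fin n)) (f.symm ((n - 1 : ℕ) : Fin n)) := hD.2.2.2.1 _ _ _
        _ ≤ _ := by
            have := hD.2.2.2.1 (f.symm (i : Fin n)) (f.symm (j : Fin n))
              (f.symm ((n - 1 : ℕ) : Fin n))
            linarith
    have t2 := ub D hD i 0 (Nat.zero_le i)
    have t3 := ub D hD (n - 1) j hj
    have t4 : (∑ k ∈ Finset.Ico 0 i, cW f.symm w k) + (∑ k ∈ Finset.Ico i j, cW f.symm w k)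
        + (∑ k ∈ Finset.Ico j (n - 1), cW f.symm w k)
        = ∑ k ∈ Finset.range (n - 1), cW f.symm w k := by
      rw [Finset.sum_Ico_consecutive _ (Nat.zero_le i) hij,
        Finset.sum_Ico_consecutive _ (le_trans (Nat.zero_le i) hij) hj, ← Finset.range_eq_Ico]
    have t5 := hedge0 D hD
    rw [hs] at t4
    linarith
  -- half uniqueness
  have halfuniq : ∀ D, GraphMetric G w D → ∀ u v : V, (f u).val ≤ (f v).val →
      D u v = cX f w v - cX f w u := by
    intro D hD u v huv
    have hj : (f v).val ≤ n - 1 := by have := (f v).isLt; omega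
    have hgu : f.symm (((f u).val : ℕ) : Fin n) = u := by
      rw [Fin.cast_val_eq_self]; exact f.symm_apply_apply u
    have hgv : f.symm (((f v).val : ℕ) : Fin n) = v := by
      rw [Fin.cast_val_eq_self]; exact f.symm_apply_apply v
    have e1 := ub D hD (f v).val (f u).val huv
    have e2 := lb D hD (f u).val (f v).val huv hj
    rw [hgu, hgv] at e1 e2
    have hX : cX f w v - cX f w u = ∑ k ∈ Finset.Ico (f u).val (f v).val, cW f.symm w k := by
      simp only [cX]
      rw [Finset.sum_Ico_eq_sub _ huv]
    linarith
  have Dnonneg : ∀ D, GraphMetric G w D → ∀ u v : V, 0 ≤ D u v := by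
    intro D hD u v
    rcases eq_or_ne u v with rfl | h
    · rw [hD.1]
    · exact le_of_lt (hD.2.1 u v h)
  have uniq : ∀ D, GraphMetric G w D → ∀ u v : V, D u v = |cX f w u - cX f w v| := by
    intro D hD u v
    rcases le_total (f u).val (f v).val with h | h
    · rw [abs_sub_comm, halfuniq D hD u v h, abs_of_nonneg]
      rw [← halfuniq D hD u v h]
      exact Dnonneg D hD u v
    · rw [hD.2.2.1, halfuniq D hD v u h, abs_of_nonneg]
      rw [← halfuniq D hD v u h]
      exact Dnonneg D hD v u
  -- edge value of the candidate metric
  have hedge1 : ∀ u v : V, f u + 1 = f v → |cX f w u - cX f w v| = w s(u, v) := by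
    intro u v h
    have hgu : f.symm (((f u).val : ℕ) : Fin n) = u := by
      rw [Fin.cast_val_eq_self]; exact f.symm_apply_apply u
    have hiu : (f u).val < n := (f u).isLt
    rcases Nat.lt_or_ge ((f u).val) (n - 1) with hlt | hge
    · -- non-wrapping edge
      have hfv : (f v).val = (f u).val + 1 := by
        rw [← h, Fin.add_def, Fin.val_one']
        have e1 : 1 % n = 1 := Nat.mod_eq_of_lt (by omega)
        rw [e1]
        exact Nat.mod_eq_of_lt (by omega)
      have hXd : cX f w v - cX f w u = cW f.symm w (f u).val := by
        simp only [cX, hfv, Finset.sum_range_succ]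
        ring
      have hcw : cW f.symm w (f u).val = w s(u, v) := by
        simp only [cW]
        rw [hgu, Fin.cast_val_eq_self, h, Equiv.symm_apply_apply]
      rw [abs_sub_comm, hXd, hcw, abs_of_nonneg]
      rw [← hcw]
      exact le_of_lt (hWpos _)
    · -- wrapping edge
      have hiu' : (f u).val = n - 1 := by omega
      have hfu : f u = ((n - 1 : ℕ) : Fin n) := by
        apply Fin.ext
        rw [Fin.val_cast_of_lt (by omega)]
        exact hiu'
      have hfv : f v = 0 := by rw [← h, hfu, h1]
      have hfv0 : (f v).val = 0 := by rw [hfv]; rfl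
      have hXu : cX f w u = cW f.symm w (n - 1) := by
        simp only [cX, hiu']
        exact hs
      have hXv : cX f w v = 0 := by simp [cX, hfv0]
      have hcw : cW f.symm w (n - 1) = w s(u, v) := by
        rw [hcWlast]
        congr 1
        rw [← hfu, ← hfv, Equiv.symm_apply_apply, Equiv.symm_apply_apply]
      rw [hXu, hXv, sub_zero, abs_of_nonneg (le_of_lt (hWpos _)), hcw]
  constructor
  · refine ⟨fun u => by simp, ?_, fun u v => abs_sub_comm _ _,
      fun u v z => abs_sub_le _ _ _, ?_⟩
    · -- positivity
      have key : ∀ u v : V, (f u).val < (f v).val → 0 < |cX f w u - cX f w v| := by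
        intro u v hlt
        have hX : cX f w v - cX f w u = ∑ k ∈ Finset.Ico (f u).val (f v).val, cW f.symm w k := by
          simp only [cX]
          rw [Finset.sum_Ico_eq_sub _ (le_of_lt hlt)]
        have hpos : 0 < cX f w v - cX f w u := by
          rw [hX]
          exact Finset.sum_pos (fun k _ => hWpos k) (Finset.nonempty_Ico.2 hlt)
        rw [abs_sub_comm]
        exact lt_of_lt_of_le hpos (le_abs_self _)
      intro u v huv
      have : (f u).val ≠ (f v).val := by
        intro hval
        exact huv (f.injective (Fin.ext hval))
      show 0 < |cX f w u - cX f w v|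
      rcases lt_or_gt_of_ne this with h | h
      · exact key u v h
      · rw [abs_sub_comm]; exact key v u h
    · -- edge condition
      intro u v huv
      show |cX f w u - cX f w v| = w s(u, v)
      rcases (hadj u v).1 huv with h | h
      · exact hedge1 u v h
      · rw [abs_sub_comm, hedge1 v u h, Sym2.eq_swap]
  · exact uniq

/-- Corollary c2.2.19. A weighted cycle with positive weights whose
total weight equals twice its maximal edge weight is metrizable, all metrics in `M(w)`
agree on every pair of distinct non-adjacent vertices, and hence `Ĉ` is complete. -/
theorem cycle_unique_metrization {V : Type*} [Fintype V] [DecidableEq V]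
    (G : SimpleGraph V) [DecidableRel G.Adj] (hC : IsCycleGraph G)
    (w : Sym2 V → ℝ) (hw : ∀ e ∈ G.edgeFinset, 0 < w e)
    (e₀ : Sym2 V) (he₀ : e₀ ∈ G.edgeFinset) (hmax : ∀ e ∈ G.edgeFinset, w e ≤ w e₀)
    (hsum : ∑ e ∈ G.edgeFinset, w e = 2 * w e₀) :
    (∃ D, GraphMetric G w D) ∧
    (∀ μ ν : V, μ ≠ ν → ¬G.Adj μ ν →
      ∀ D₁ D₂, GraphMetric G w D₁ → GraphMetric G w D₂ → D₁ μ ν = D₂ μ ν) ∧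
    (∀ μ ν : V, μ ≠ ν → G.Adj μ ν ∨
      (¬G.Adj μ ν ∧
        ∀ D₁ D₂, GraphMetric G w D₁ → GraphMetric G w D₂ → D₁ μ ν = D₂ μ ν)) := by
  obtain ⟨n, hn3, e, he⟩ := hC
  haveI : NeZero n := ⟨by omega⟩
  have hone : (1 : Fin n).val = 1 := by
    rw [Fin.val_one']
    exact Nat.mod_eq_of_lt (by omega)
  -- adjacency in terms of Fin arithmetic
  have hadjE : ∀ u v : V, G.Adj u v ↔ e u + 1 = e v ∨ e v + 1 = e u := by
    intro u v
    rw [he]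
    have key : ∀ a b : Fin n, (a.val + 1) % n = b.val ↔ a + 1 = b := by
      intro a b
      rw [Fin.ext_iff, Fin.add_def, hone]
    rw [key, key]
  -- the common continuation, for an edge placed at the wrap position
  have key : ∀ a b : V, G.Adj a b → e a + 1 = e b →
      (∑ e' ∈ G.edgeFinset, w e' = 2 * w s(a, b)) →
      (∃ D, GraphMetric G w D) ∧
        ∀ D, GraphMetric G w D → ∀ u v : V, D u v = |cX (e.trans (Equiv.subRight (e b))) w u
          - cX (e.trans (Equiv.subRight (e b))) w v| := by
    intro a b hab heab hsum'
    set f : V ≃ Fin n := e.trans (Equiv.subRight (e b)) with hf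
    have hfval : ∀ u : V, f u = e u - e b := fun u => rfl
    have hadjf : ∀ u v : V, G.Adj u v ↔ f u + 1 = f v ∨ f v + 1 = f u := by
      intro u v
      have hsub : ∀ p q : Fin n, p - e b + 1 = q - e b ↔ p + 1 = q := by
        intro p q
        rw [sub_add_eq_add_sub, sub_left_inj]
      rw [hadjE, hfval, hfval, hsub, hsub]
    have hgadj : ∀ i : Fin n, G.Adj (f.symm i) (f.symm (i + 1)) := by
      intro i
      rw [hadjf]
      left
      rw [Equiv.apply_symm_apply, Equiv.apply_symm_apply]
    have hcast : ∀ k : ℕ, ((k + 1 : ℕ) : Fin n) = (k : Fin n) + 1 := by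
      intro k; push_cast; ring
    have h1 : ((n - 1 : ℕ) : Fin n) + 1 = 0 := by
      rw [← hcast (n - 1)]
      have hne : n - 1 + 1 = n := by omega
      rw [hne, Fin.natCast_self]
    -- where a and b sit
    have hfa : f a = ((n - 1 : ℕ) : Fin n) := by
      have : ((n - 1 : ℕ) : Fin n) = f a := by
        have := congrArg (fun z => z - 1) h1
        rw [add_sub_cancel_right] at this
        rw [this, hfval, ← heab]
        abel
      exact this.symm
    have hfb : f b = 0 := by rw [hfval, sub_self]
    have hga : f.symm ((n - 1 : ℕ) : Fin n) = a := by rw [← hfa, Equiv.symm_apply_apply]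
    have hgb : f.symm 0 = b := by rw [← hfb, Equiv.symm_apply_apply]
    have hcWlast : cW f.symm w (n - 1) = w s(a, b) := by
      simp only [cW, h1, hga, hgb]
    -- sum over edges equals sum of cW over range n
    have hsumr : ∑ k ∈ Finset.range n, cW f.symm w k = ∑ e' ∈ G.edgeFinset, w e' := by
      rw [← Fin.sum_univ_eq_sum_range (fun k => cW f.symm w k) n]
      refine Finset.sum_bij (fun i _ => s(f.symm i, f.symm (i + 1))) ?_ ?_ ?_ ?_
      · intro i _
        exact SimpleGraph.mem_edgeFinset.2 (hgadj i)
      · intro i _ j _ hij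
        rw [Sym2.eq_iff] at hij
        rcases hij with ⟨h1', _⟩ | ⟨h1', h2'⟩
        · exact f.symm.injective h1'
        · exfalso
          have hi : i = j + 1 := f.symm.injective h1'
          have hj : j = i + 1 := (f.symm.injective h2').symm
          rw [hj] at hi
          have h0 : (0 : Fin n) = 1 + 1 := by
            have h' : i + 0 = i + (1 + 1) := by
              rw [add_zero, ← add_assoc]; exact hi
            exact add_left_cancel h'
          have hval := congrArg Fin.val h0
          rw [Fin.add_def, hone] at hval
          simp only [Fin.val_zero] at hval
          have : (1 + 1) % n = 2 := Nat.mod_eq_of_lt (by omega)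
          omega
      · intro b' hb'
        induction b' using Sym2.ind with
        | _ u v =>
          have huv : G.Adj u v := SimpleGraph.mem_edgeFinset.1 hb'
          rcases (hadjf u v).1 huv with h | h
          · refine ⟨f u, Finset.mem_univ _, ?_⟩
            show s(f.symm (f u), f.symm (f u + 1)) = s(u, v)
            rw [Equiv.symm_apply_apply, h, Equiv.symm_apply_apply]
          · refine ⟨f v, Finset.mem_univ _, ?_⟩
            show s(f.symm (f v), f.symm (f v + 1)) = s(u, v)
            rw [Equiv.symm_apply_apply, h, Equiv.symm_apply_apply, Sym2.eq_swap]
      · intro i _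
        simp only [cW, Fin.cast_val_eq_self]
    -- the half-sum condition
    have hs : ∑ k ∈ Finset.range (n - 1), cW f.symm w k = cW f.symm w (n - 1) := by
      have hr : ∑ k ∈ Finset.range n, cW f.symm w k
          = (∑ k ∈ Finset.range (n - 1), cW f.symm w k) + cW f.symm w (n - 1) := by
        have hne : n - 1 + 1 = n := by omega
        have := Finset.sum_range_succ (fun k => cW f.symm w k) (n - 1)
        rw [hne] at this
        exact this
      rw [hsumr, hsum', hcWlast] at hr
      rw [hcWlast]
      linarith
    have hw' : ∀ u v : V, G.Adj u v → 0 < w s(u, v) := by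
      intro u v huv
      exact hw _ (SimpleGraph.mem_edgeFinset.2 huv)
    obtain ⟨hmetr, huniq⟩ := aux_metr G hn3 f hadjf w hw' hs
    exact ⟨⟨_, hmetr⟩, huniq⟩
  -- extract endpoints of e₀
  revert he₀ hmax hsum
  induction e₀ using Sym2.ind with
  | _ a b =>
    intro he₀ hmax hsum
    have hab : G.Adj a b := SimpleGraph.mem_edgeFinset.1 he₀
    have main : (∃ D, GraphMetric G w D) ∧
        ∀ μ ν : V, ∀ D₁ D₂, GraphMetric G w D₁ → GraphMetric G w D₂ → D₁ μ ν = D₂ μ ν := by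
      rcases (hadjE a b).1 hab with h | h
      · obtain ⟨hex, huniq⟩ := key a b hab h hsum
        exact ⟨hex, fun μ ν D₁ D₂ h₁ h₂ => by rw [huniq D₁ h₁, huniq D₂ h₂]⟩
      · have hab' : G.Adj b a := hab.symm
        have hsum' : ∑ e' ∈ G.edgeFinset, w e' = 2 * w s(b, a) := by
          rw [← Sym2.eq_swap]; exact hsum
        obtain ⟨hex, huniq⟩ := key b a hab' h hsum'
        exact ⟨hex, fun μ ν D₁ D₂ h₁ h₂ => by rw [huniq D₁ h₁, huniq D₂ h₂]⟩
    refine ⟨main.1, fun μ ν _ _ D₁ D₂ h₁ h₂ => main.2 μ ν D₁ D₂ h₁ h₂, ?_⟩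
    intro μ ν hμν
    by_cases hadj : G.Adj μ ν
    · exact Or.inl hadj
    · exact Or.inr ⟨hadj, fun D₁ D₂ h₁ h₂ => main.2 μ ν D₁ D₂ h₁ h₂⟩
end

section
/- Let G=G(w) be a finite, connected, metrizable weighted graph and let μ, ν be distinct non-adjacent vertices of G. Then {μ,ν} ∈ E^{un}(G) if and only if there exists a cycle C ⊆ G such that μ, ν ∈ V(C) and Σ_{e∈E(C)} w(e) = 2 max_{e∈E(C)} w(e). -/
open Filter Topology

namespace UDHelp

open SimpleGraph

variable {V : Type*} {G : SimpleGraph V}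

/-- weight of a walk -/
noncomputable def wt (w : Sym2 V → ℝ) {x y : V} (p : G.Walk x y) : ℝ := (p.edges.map w).sum

@[simp] lemma wt_nil (w : Sym2 V → ℝ) {x : V} : wt w (Walk.nil : G.Walk x x) = 0 := by
  simp [wt]

@[simp] lemma wt_cons (w : Sym2 V → ℝ) {x y z : V} (h : G.Adj x y) (p : G.Walk y z) :
    wt w (Walk.cons h p) = w s(x, y) + wt w p := by simp [wt]

lemma wt_append (w : Sym2 V → ℝ) {x y z : V} (p : G.Walk x y) (q : G.Walk y z) :
    wt w (p.append q) = wt w p + wt w q := by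
  simp [wt, Walk.edges_append]

lemma wt_reverse (w : Sym2 V → ℝ) {x y : V} (p : G.Walk x y) :
    wt w p.reverse = wt w p := by
  simp [wt, Walk.edges_reverse, List.sum_reverse]

lemma wt_nonneg {w : Sym2 V → ℝ} (hw : ∀ e ∈ G.edgeSet, 0 ≤ w e) {x y : V} (p : G.Walk x y) :
    0 ≤ wt w p := by
  apply List.sum_nonneg
  rintro r hr
  obtain ⟨e, he, rfl⟩ := List.mem_map.1 hr
  exact hw e (p.edges_subset_edgeSet he)

lemma metric_le_wt {w : Sym2 V → ℝ} {D : V → V → ℝ} (hD : GraphMetric G w D)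
    {x y : V} (p : G.Walk x y) : D x y ≤ wt w p := by
  induction p with
  | nil => simp [hD.1]
  | @cons a b c h q ih =>
    calc D a c ≤ D a b + D b c := hD.2.2.2.1 a b c
    _ ≤ w s(a, b) + wt w q := by
        have := hD.2.2.2.2 a b h
        linarith
    _ = wt w (Walk.cons h q) := by simp

lemma two_mul_le_wt {w : Sym2 V → ℝ} {D : V → V → ℝ} (hD : GraphMetric G w D)
    {x y : V} (p : G.Walk x y) {e : Sym2 V} (he : e ∈ p.edges) :
    2 * w e ≤ D x y + wt w p := by
  induction p with
  | nil => simp at he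
  | @cons a b c h q ih =>
    rw [Walk.edges_cons, List.mem_cons] at he
    rcases he with rfl | he
    · have h1 : D a b ≤ D a c + D c b := hD.2.2.2.1 a c b
      have h2 : D c b ≤ wt w q := by
        rw [hD.2.2.1 c b]; exact metric_le_wt hD q
      have h3 : D a b = w s(a, b) := hD.2.2.2.2 a b h
      rw [wt_cons]; linarith
    · have h1 : D b c ≤ D b a + D a c := hD.2.2.2.1 b a c
      have h2 : 2 * w e ≤ D b c + wt w q := ih he
      have h3 : D b a = w s(a, b) := by rw [hD.2.2.1 b a]; exact hD.2.2.2.2 a b h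
      rw [wt_cons]; linarith

lemma sum_map_le_of_nodup_subset {α : Type*} [DecidableEq α] (w : α → ℝ) {l₁ l₂ : List α} (h₁ : l₁.Nodup)
    (h₂ : ∀ x ∈ l₁, x ∈ l₂) (h₀ : ∀ x ∈ l₂, 0 ≤ w x) :
    (l₁.map w).sum ≤ (l₂.map w).sum := by
  induction l₁ generalizing l₂ with
  | nil =>
    simpa using List.sum_nonneg (by rintro r hr; obtain ⟨e, he, rfl⟩ := List.mem_map.1 hr; exact h₀ e he)
  | cons a s ih =>
    have ha : a ∈ l₂ := h₂ a (by simp)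
    have hperm : List.Perm (l₂.map w) ((a :: l₂.erase a).map w) := (List.perm_cons_erase ha).map w
    rw [hperm.sum_eq, List.map_cons, List.sum_cons, List.map_cons, List.sum_cons]
    have hsub : ∀ x ∈ s, x ∈ l₂.erase a := by
      intro x hx
      have hxa : x ≠ a := by rintro rfl; exact (List.nodup_cons.1 h₁).1 hx
      exact (List.mem_erase_of_ne hxa).2 (h₂ x (by simp [hx]))
    have h₀' : ∀ x ∈ l₂.erase a, 0 ≤ w x := fun x hx => h₀ x (List.erase_subset hx)
    have := ih (List.nodup_cons.1 h₁).2 hsub h₀'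
    linarith

lemma exists_wt_lt_of_not_isPath [DecidableEq V] {w : Sym2 V → ℝ} (hwpos : ∀ e ∈ G.edgeSet, 0 < w e)
    {x y : V} (p : G.Walk x y) (hp : ¬ p.IsPath) : ∃ q : G.Walk x y, wt w q < wt w p := by
  classical
  induction p with
  | nil => exact absurd Walk.IsPath.nil hp
  | @cons a b c h q ih =>
    by_cases hq : q.IsPath
    · have ha : a ∈ q.support := by
        by_contra hns
        exact hp ((Walk.cons_isPath_iff h q).2 ⟨hq, hns⟩)
      refine ⟨q.dropUntil a ha, ?_⟩
      have hsplit : wt w q = wt w (q.takeUntil a ha) + wt w (q.dropUntil a ha) := by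
        rw [← wt_append, q.take_spec ha]
      have h1 : 0 ≤ wt w (q.takeUntil a ha) :=
        wt_nonneg (fun e he => (hwpos e he).le) _
      have h2 : 0 < w s(a, b) := hwpos _ (G.mem_edgeSet.2 h)
      rw [wt_cons]; linarith
    · obtain ⟨q', hq'⟩ := ih hq
      exact ⟨Walk.cons h q', by rw [wt_cons, wt_cons]; linarith⟩

/-- min-weight distance over paths -/
noncomputable def mdist (G : SimpleGraph V) (w : Sym2 V → ℝ) (x y : V) : ℝ :=
  sInf {r | ∃ p : G.Walk x y, p.IsPath ∧ wt w p = r}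

/-- shortcut pseudo-metric -/
def sc (d : V → V → ℝ) (μ ν : V) (t : ℝ) (x y : V) : ℝ :=
  min (d x y) (min (d x μ + t + d ν y) (d x ν + t + d μ y))

lemma sc_triangle {d : V → V → ℝ} (hsymm : ∀ x y, d x y = d y x)
    (htri : ∀ x y z, d x z ≤ d x y + d y z) (h0 : ∀ x y, 0 ≤ d x y)
    (μ ν : V) {t : ℝ} (ht : 0 ≤ t) (x y z : V) :
    sc d μ ν t x z ≤ sc d μ ν t x y + sc d μ ν t y z := by
  have L1 : sc d μ ν t x z ≤ d x z := min_le_left _ _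
  have L2 : sc d μ ν t x z ≤ d x μ + t + d ν z := (min_le_right _ _).trans (min_le_left _ _)
  have L3 : sc d μ ν t x z ≤ d x ν + t + d μ z := (min_le_right _ _).trans (min_le_right _ _)
  unfold sc
  rcases min_cases (d x y) (min (d x μ + t + d ν y) (d x ν + t + d μ y)) with ⟨e1, -⟩ | ⟨e1, -⟩ <;>
  rcases min_cases (d y z) (min (d y μ + t + d ν z) (d y ν + t + d μ z)) with ⟨e2, -⟩ | ⟨e2, -⟩ <;>
  rw [e1, e2] <;>
  [skip; rcases min_cases (d y μ + t + d ν z) (d y ν + t + d μ z) with ⟨e3, -⟩ | ⟨e3, -⟩ <;> rw [e3];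
   rcases min_cases (d x μ + t + d ν y) (d x ν + t + d μ y) with ⟨e4, -⟩ | ⟨e4, -⟩ <;> rw [e4];
   rcases min_cases (d x μ + t + d ν y) (d x ν + t + d μ y) with ⟨e4, -⟩ | ⟨e4, -⟩ <;> rw [e4] <;>
     rcases min_cases (d y μ + t + d ν z) (d y ν + t + d μ z) with ⟨e3, -⟩ | ⟨e3, -⟩ <;> rw [e3]] <;>
  · unfold sc at L1 L2 L3
    linarith [htri x y z, htri x y μ, htri x y ν, htri x μ z, htri x ν z, htri ν y z,
      htri μ y z, h0 ν y, h0 y μ, h0 μ y, h0 y ν]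


variable [Fintype V] [DecidableEq V]

lemma mdist_set_finite (G : SimpleGraph V) (w : Sym2 V → ℝ) (x y : V) :
    {r | ∃ p : G.Walk x y, p.IsPath ∧ wt w p = r}.Finite := by
  classical
  have hsub : {r | ∃ p : G.Walk x y, p.IsPath ∧ wt w p = r} ⊆
      Set.range (fun p : G.Path x y => wt w (p : G.Walk x y)) := by
    rintro r ⟨p, hp, rfl⟩; exact ⟨⟨p, hp⟩, rfl⟩
  exact (Set.finite_range _).subset hsub

lemma mdist_set_nonempty (hconn : G.Connected) (w : Sym2 V → ℝ) (x y : V) :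
    {r | ∃ p : G.Walk x y, p.IsPath ∧ wt w p = r}.Nonempty := by
  obtain ⟨p⟩ := hconn.preconnected x y
  exact ⟨wt w p.bypass, p.bypass, p.bypass_isPath, rfl⟩

lemma mdist_exists (hconn : G.Connected) (w : Sym2 V → ℝ) (x y : V) :
    ∃ p : G.Walk x y, p.IsPath ∧ wt w p = mdist G w x y :=
  (mdist_set_nonempty hconn w x y).csInf_mem (mdist_set_finite G w x y)

lemma mdist_le_path (w : Sym2 V → ℝ) {x y : V} (p : G.Walk x y) (hp : p.IsPath) :
    mdist G w x y ≤ wt w p :=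
  csInf_le (mdist_set_finite G w x y).bddBelow ⟨p, hp, rfl⟩

lemma mdist_le_walk {w : Sym2 V → ℝ} (hw : ∀ e ∈ G.edgeSet, 0 ≤ w e) {x y : V}
    (p : G.Walk x y) : mdist G w x y ≤ wt w p := by
  refine (mdist_le_path w p.bypass p.bypass_isPath).trans ?_
  exact sum_map_le_of_nodup_subset w p.bypass_isPath.isTrail.edges_nodup
    (fun e he => p.edges_bypass_subset he) (fun e he => hw e (p.edges_subset_edgeSet he))

lemma mdist_metric (hconn : G.Connected) {w : Sym2 V → ℝ} (hw : ∀ e ∈ G.edgeSet, 0 ≤ w e)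
    {D₀ : V → V → ℝ} (hD₀ : GraphMetric G w D₀) : GraphMetric G w (mdist G w) := by
  have hge : ∀ x y : V, D₀ x y ≤ mdist G w x y := by
    intro x y
    obtain ⟨p, hp, hpe⟩ := mdist_exists hconn w x y
    rw [← hpe]; exact metric_le_wt hD₀ p
  refine ⟨?_, ?_, ?_, ?_, ?_⟩
  · intro u
    have h1 : mdist G w u u ≤ 0 := by
      simpa using mdist_le_path w (Walk.nil : G.Walk u u) Walk.IsPath.nil
    have h2 : 0 ≤ mdist G w u u := by
      have := hge u u; rw [hD₀.1 u] at this; linarith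
    linarith
  · intro u v huv
    exact lt_of_lt_of_le (hD₀.2.1 u v huv) (hge u v)
  · intro u v
    have key : ∀ a b : V, mdist G w a b ≤ mdist G w b a := by
      intro a b
      obtain ⟨p, hp, hpe⟩ := mdist_exists hconn w b a
      rw [← hpe, ← wt_reverse]
      exact mdist_le_walk hw p.reverse
    exact le_antisymm (key u v) (key v u)
  · intro u v z
    obtain ⟨p, hp, hpe⟩ := mdist_exists hconn w u v
    obtain ⟨q, hq, hqe⟩ := mdist_exists hconn w v z
    calc mdist G w u z ≤ wt w (p.append q) := mdist_le_walk hw _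
    _ = mdist G w u v + mdist G w v z := by rw [wt_append, hpe, hqe]
  · intro u v huv
    have h1 : mdist G w u v ≤ w s(u, v) := by
      have := mdist_le_walk hw (Walk.cons huv Walk.nil)
      simpa using this
    have h2 : w s(u, v) ≤ mdist G w u v := by
      have := hge u v
      rwa [hD₀.2.2.2.2 u v huv] at this
    linarith



lemma start_mem_of_edges {x y : V} (p : G.Walk x y) (hxy : x ≠ y) {e : Sym2 V}
    (hsub : ∀ f ∈ p.edges, f = e) : x ∈ e := by
  cases p with
  | nil => exact absurd rfl hxy
  | cons h q =>
    have h1 := hsub _ (by rw [Walk.edges_cons]; exact List.mem_cons_self)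
    rw [← h1]
    exact Sym2.mem_mk_left _ _

lemma sc_graphMetric {w : Sym2 V → ℝ} {d : V → V → ℝ} (hd : GraphMetric G w d)
    {μ ν : V} {t : ℝ} (ht : 0 < t)
    (hedge : ∀ a b : V, G.Adj a b → w s(a, b) ≤ d a μ + t + d ν b) :
    GraphMetric G w (sc d μ ν t) := by
  obtain ⟨hself, hpos, hsymm, htri, hedges⟩ := hd
  have h0 : ∀ x y, 0 ≤ d x y := by
    intro x y
    nlinarith [htri x y x, hself x, hsymm x y]
  refine ⟨?_, ?_, ?_, fun x y z => sc_triangle hsymm htri h0 μ ν ht.le x y z, ?_⟩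
  · intro u
    have hle : sc d μ ν t u u ≤ 0 := by
      simp only [sc]
      exact (min_le_left _ _).trans (hself u).le
    have hge : 0 ≤ sc d μ ν t u u := by
      simp only [sc]
      exact le_min (h0 u u) (le_min (by linarith [h0 u μ, h0 ν u]) (by linarith [h0 u ν, h0 μ u]))
    linarith
  · intro u v huv
    simp only [sc]
    exact lt_min (hpos u v huv) (lt_min (by linarith [h0 u μ, h0 ν v]) (by linarith [h0 u ν, h0 μ v]))
  · intro x y
    show min _ (min _ _) = min _ (min _ _)
    have e1 := hsymm x y
    have e2 : d x μ + t + d ν y = d y ν + t + d μ x := by rw [hsymm x μ, hsymm ν y]; ring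
    have e3 : d x ν + t + d μ y = d y μ + t + d ν x := by rw [hsymm x ν, hsymm μ y]; ring
    rw [e1, e2, e3, min_comm (d y ν + t + d μ x) (d y μ + t + d ν x)]
  · intro u v huv
    have hA : w s(u, v) ≤ d u μ + t + d ν v := hedge u v huv
    have hB : w s(u, v) ≤ d u ν + t + d μ v := by
      have h1 := hedge v u huv.symm
      have h2 : s(v, u) = s(u, v) := Sym2.eq_swap
      rw [h2] at h1
      rw [hsymm u ν, hsymm μ v]; linarith
    have hduv := hedges u v huv
    simp only [sc]
    refine le_antisymm ?_ (le_min hduv.ge (le_min hA hB))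
    rw [← hduv]; exact min_le_left _ _

end UDHelp

open UDHelp SimpleGraph

/-- Lemma l2.2.20. For distinct non-adjacent vertices `μ, ν` of a
finite connected metrizable weighted graph, all metrics in `M(w)` agree on `(μ, ν)`
(i.e. `{μ,ν} ∈ E^{un}(G)`) iff there is a cycle `C ⊆ G` through `μ` and `ν` with
`Σ_{e∈E(C)} w(e) = 2 max_{e∈E(C)} w(e)`. -/
theorem unique_distance_iff_exists_cycle {V : Type*} [Fintype V] (G : SimpleGraph V)
    (hconn : G.Connected) (w : Sym2 V → ℝ) (hw : ∀ e ∈ G.edgeSet, 0 ≤ w e)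
    (hmet : ∃ D, GraphMetric G w D)
    (μ ν : V) (hne : μ ≠ ν) (hnadj : ¬G.Adj μ ν) :
    (∀ D₁ D₂, GraphMetric G w D₁ → GraphMetric G w D₂ → D₁ μ ν = D₂ μ ν) ↔
      ∃ W : G.Walk μ μ, W.IsCycle ∧ ν ∈ W.support ∧
        ∃ e₀ ∈ W.edges, (∀ e ∈ W.edges, w e ≤ w e₀) ∧
          (W.edges.map w).sum = 2 * w e₀ := by
  classical
  obtain ⟨D₀, hD₀⟩ := hmet
  have hwpos : ∀ e ∈ G.edgeSet, 0 < w e := by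
    intro e he
    induction e using Sym2.ind with
    | _ u v =>
      rw [SimpleGraph.mem_edgeSet] at he
      rw [← hD₀.2.2.2.2 u v he]
      exact hD₀.2.1 u v he.ne
  have hd : GraphMetric G w (mdist G w) := mdist_metric hconn hw hD₀
  constructor
  · -- forward direction
    intro h
    have hdpos : 0 < mdist G w μ ν := hd.2.1 μ ν hne
    -- key dart
    have key : ∃ a b : V, G.Adj a b ∧
        mdist G w a μ + mdist G w μ ν + mdist G w ν b ≤ w s(a, b) := by
      by_contra hk
      push_neg at hk
      set c : V × V → ℝ := fun ab =>
        if G.Adj ab.1 ab.2 then w s(ab.1, ab.2) - mdist G w ab.1 μ - mdist G w ν ab.2 else 0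
        with hc
      have hNE : (Finset.univ : Finset (V × V)).Nonempty := ⟨(μ, ν), Finset.mem_univ _⟩
      set t : ℝ := max (mdist G w μ ν / 2) (Finset.univ.sup' hNE c) with htdef
      have ht0 : 0 < t := lt_of_lt_of_le (by linarith) (le_max_left _ _)
      have htlt : t < mdist G w μ ν := by
        apply max_lt (by linarith)
        rw [Finset.sup'_lt_iff]
        intro ab _
        rw [hc]
        dsimp only
        split_ifs with hadj
        · have := hk ab.1 ab.2 hadj
          linarith
        · linarith
      have hedge : ∀ a b : V, G.Adj a b → w s(a, b) ≤ mdist G w a μ + t + mdist G w ν b := by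
        intro a b hab
        have h1 : c (a, b) ≤ t :=
          le_trans (Finset.le_sup' c (Finset.mem_univ (a, b))) (le_max_right _ _)
        rw [hc] at h1
        simp only [if_pos hab] at h1
        linarith
      have hD₁ : GraphMetric G w (sc (mdist G w) μ ν t) := sc_graphMetric hd ht0 hedge
      have hcontr := h (mdist G w) (sc (mdist G w) μ ν t) hd hD₁
      have hsmall : sc (mdist G w) μ ν t μ ν ≤ t := by
        have h2 : mdist G w μ μ + t + mdist G w ν ν = t := by rw [hd.1 μ, hd.1 ν]; ring
        calc sc (mdist G w) μ ν t μ ν ≤ mdist G w μ μ + t + mdist G w ν ν :=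
              (min_le_right _ _).trans (min_le_left _ _)
          _ = t := h2
      linarith [hcontr ▸ hsmall]
    obtain ⟨a, b, hab, hle⟩ := key
    have hdab : mdist G w a b = w s(a, b) := hd.2.2.2.2 a b hab
    have heq : mdist G w a μ + mdist G w μ ν + mdist G w ν b = w s(a, b) := by
      refine le_antisymm hle ?_
      rw [← hdab]
      calc mdist G w a b ≤ mdist G w a μ + mdist G w μ b := hd.2.2.2.1 a μ b
        _ ≤ mdist G w a μ + (mdist G w μ ν + mdist G w ν b) := by
            linarith [hd.2.2.2.1 μ ν b]
        _ = _ := by ring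
    obtain ⟨P, hPp, hPwt⟩ := mdist_exists hconn w a μ
    obtain ⟨Q, hQp, hQwt⟩ := mdist_exists hconn w μ ν
    obtain ⟨R, hRp, hRwt⟩ := mdist_exists hconn w ν b
    set W₀ := P.append (Q.append R) with hW₀def
    have hW0wt : wt w W₀ = w s(a, b) := by
      rw [hW₀def, wt_append, wt_append, hPwt, hQwt, hRwt]; linarith [heq]
    have hW0path : W₀.IsPath := by
      by_contra hnp
      obtain ⟨q, hq⟩ := exists_wt_lt_of_not_isPath hwpos W₀ hnp
      have h1 := mdist_le_walk hw q
      linarith [hW0wt, hdab]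
    have he0 : s(a, b) ∉ W₀.edges := by
      intro he
      have hperm : List.Perm W₀.edges (s(a, b) :: W₀.edges.erase s(a, b)) :=
        List.perm_cons_erase he
      have hsum2 : wt w W₀ = w s(a, b) + ((W₀.edges.erase s(a, b)).map w).sum := by
        show (W₀.edges.map w).sum = _
        rw [(hperm.map w).sum_eq]; simp
      have hz : ((W₀.edges.erase s(a, b)).map w).sum = 0 := by linarith [hW0wt]
      have herased : W₀.edges.erase s(a, b) = [] := by
        by_contra hne'
        have hpos : 0 < ((W₀.edges.erase s(a, b)).map w).sum := by
          apply List.sum_pos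
          · rintro r hr
            obtain ⟨e, he', rfl⟩ := List.mem_map.1 hr
            exact hwpos e (W₀.edges_subset_edgeSet (List.erase_subset he'))
          · simpa using hne'
        linarith
      have hedges1 : W₀.edges = [s(a, b)] := by
        have h' := hperm
        rw [herased] at h'
        exact List.perm_singleton.1 h'
      have hQsub : ∀ f ∈ Q.edges, f = s(a, b) := by
        intro f hf
        have : f ∈ W₀.edges := by
          rw [hW₀def, Walk.edges_append, Walk.edges_append]
          simp [hf]
        rw [hedges1] at this
        simpa using this
      have hμe : μ ∈ s(a, b) := start_mem_of_edges Q hne hQsub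
      have hνe : ν ∈ s(a, b) := by
        refine start_mem_of_edges Q.reverse hne.symm ?_
        intro f hf
        rw [Walk.edges_reverse, List.mem_reverse] at hf
        exact hQsub f hf
      rcases Sym2.mem_iff.1 hμe with h1 | h1 <;> rcases Sym2.mem_iff.1 hνe with h2 | h2
      · exact hne (h1.trans h2.symm)
      · exact hnadj (by rw [h1, h2]; exact hab)
      · exact hnadj (by rw [h1, h2]; exact hab.symm)
      · exact hne (h1.trans h2.symm)
    have hC : (Walk.cons hab W₀.reverse).IsCycle := by
      refine SimpleGraph.Path.cons_isCycle ⟨W₀.reverse, hW0path.reverse⟩ hab ?_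
      show s(a, b) ∉ W₀.reverse.edges
      rw [Walk.edges_reverse, List.mem_reverse]
      exact he0
    have hμW₀ : μ ∈ W₀.support := by
      rw [hW₀def, Walk.mem_support_append_iff]
      exact Or.inl P.end_mem_support
    have hνW₀ : ν ∈ W₀.support := by
      rw [hW₀def, Walk.mem_support_append_iff, Walk.mem_support_append_iff]
      exact Or.inr (Or.inl Q.end_mem_support)
    have hμC : μ ∈ (Walk.cons hab W₀.reverse).support := by
      rw [Walk.support_cons]
      right
      rw [Walk.support_reverse]
      exact List.mem_reverse.2 hμW₀
    have hνtail : ν ∈ (Walk.cons hab W₀.reverse).support.tail := by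
      rw [Walk.support_cons]
      show ν ∈ W₀.reverse.support
      rw [Walk.support_reverse]
      exact List.mem_reverse.2 hνW₀
    refine ⟨(Walk.cons hab W₀.reverse).rotate μ hμC, hC.rotate hμC, ?_, s(a, b), ?_, ?_, ?_⟩
    · refine List.mem_of_mem_tail ?_
      exact ((Walk.support_rotate (Walk.cons hab W₀.reverse) μ hμC).perm.mem_iff).2 hνtail
    · rw [((Walk.rotate_edges (Walk.cons hab W₀.reverse) μ hμC).perm.mem_iff)]
      rw [Walk.edges_cons]
      exact List.mem_cons_self
    · intro e he
      rw [((Walk.rotate_edges (Walk.cons hab W₀.reverse) μ hμC).perm.mem_iff)] at he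
      rw [Walk.edges_cons] at he
      rcases List.mem_cons.1 he with rfl | he
      · exact le_refl _
      · rw [Walk.edges_reverse, List.mem_reverse] at he
        have h1 : w e ≤ wt w W₀ := by
          refine List.single_le_sum ?_ _ (List.mem_map_of_mem (f := w) he)
          rintro r hr
          obtain ⟨f, hf, rfl⟩ := List.mem_map.1 hr
          exact hw f (W₀.edges_subset_edgeSet hf)
        linarith [hW0wt]
    · rw [((Walk.rotate_edges (Walk.cons hab W₀.reverse) μ hμC).perm.map w).sum_eq]
      show wt w (Walk.cons hab W₀.reverse) = 2 * w s(a, b)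
      rw [wt_cons, wt_reverse, hW0wt]
      ring
  · -- backward direction
    rintro ⟨W, hcyc, hν, e₀, he₀, hmax, hsum⟩ D₁ D₂ hD₁ hD₂
    have hspec : (W.takeUntil ν hν).append (W.dropUntil ν hν) = W := W.take_spec hν
    have hsum' : wt w (W.takeUntil ν hν) + wt w (W.dropUntil ν hν) = 2 * w e₀ := by
      rw [← wt_append, hspec]
      exact hsum
    have hmem : e₀ ∈ (W.takeUntil ν hν).edges ∨ e₀ ∈ (W.dropUntil ν hν).edges := by
      rw [← List.mem_append]
      rw [← Walk.edges_append, hspec]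
      exact he₀
    rcases hmem with hmA | hmB
    · have hgen : ∀ D, GraphMetric G w D → D μ ν = wt w (W.dropUntil ν hν) := by
        intro D hD
        have h1 := two_mul_le_wt hD (W.takeUntil ν hν) hmA
        have h2 : D μ ν ≤ wt w (W.dropUntil ν hν) := by
          rw [hD.2.2.1 μ ν]
          exact metric_le_wt hD _
        linarith
      rw [hgen D₁ hD₁, hgen D₂ hD₂]
    · have hgen : ∀ D, GraphMetric G w D → D μ ν = wt w (W.takeUntil ν hν) := by
        intro D hD
        have h1 := two_mul_le_wt hD (W.dropUntil ν hν) hmB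
        have h2 : D μ ν ≤ wt w (W.takeUntil ν hν) := metric_le_wt hD _
        have h3 : D ν μ = D μ ν := hD.2.2.1 ν μ
        linarith
      rw [hgen D₁ hD₁, hgen D₂ hD₂]
end
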